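/- arXiv:2410.17630 — 4 statements merged into one kernel-verified Lean document; each statement's English description precedes it below -/
import Mathlib

section
/- The first Dirichlet eigenvalue of a k-uniform supertree with boundary is positive and simple, and every corresponding eigenfunction is either strictly positive on all interior vertices or strictly negative on all interior vertices. -/
open Finset

variable {V : Type*} [Fintype V] [DecidableEq V]

/-- The degree of a vertex: the number of edges containing it. -/
def deg (E : Finset (Finset V)) (v : V) : ℕ := (E.filter (fun e => v ∈ e)).card

/-- The adjacency matrix of a hypergraph. -/
noncomputable def adjMat (E : Finset (Finset V)) (i j : V) : ℝ :=
  if i ≠ j then ∑ e ∈ E.filter (fun e => i ∈ e ∧ j ∈ e), (1 : ℝ) / ((e.card : ℝ) - 1) else 0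

/-- The Laplacian L = D - A applied to a function. -/
noncomputable def lap (E : Finset (Finset V)) (f : V → ℝ) (i : V) : ℝ :=
  (deg E i : ℝ) * f i - ∑ j, adjMat E i j * f j

/-- The Laplacian quadratic form ⟨Lf, f⟩. -/
noncomputable def lapForm (E : Finset (Finset V)) (f : V → ℝ) : ℝ :=
  ∑ i, lap E f i * f i

/-- Two vertices are adjacent if they are distinct and share an edge. -/
def HAdj (E : Finset (Finset V)) (u v : V) : Prop :=
  u ≠ v ∧ ∃ e ∈ E, u ∈ e ∧ v ∈ e

/-- A hypergraph is connected if any two vertices are joined by a path. -/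
def HyperConnected (E : Finset (Finset V)) : Prop :=
  ∀ u v : V, Relation.ReflTransGen (HAdj E) u v

/-- A cycle: distinct vertices u_1,…,u_p and distinct edges e_1,…,e_p (p ≥ 2)
with u_i, u_{i+1} ∈ e_i cyclically. -/
def HasCycle (E : Finset (Finset V)) : Prop :=
  ∃ (p : ℕ) (hp : 2 ≤ p) (u : Fin p → V) (e : Fin p → Finset V),
    Function.Injective u ∧ Function.Injective e ∧
    (∀ i, e i ∈ E) ∧ (∀ i : Fin p, u i ∈ e i ∧ u (i + ⟨1, by omega⟩) ∈ e i)

/-- A k-uniform supertree: connected, acyclic, every edge of size k. -/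
def IsSupertree (k : ℕ) (E : Finset (Finset V)) : Prop :=
  (∀ e ∈ E, e.card = k) ∧ HyperConnected E ∧ ¬ HasCycle E

/-- The Rayleigh quotient. -/
noncomputable def rayleigh (E : Finset (Finset V)) (f : V → ℝ) : ℝ :=
  lapForm E f / ∑ v, (f v) ^ 2

/-- f vanishes on the boundary (the degree-one vertices). -/
def Vanishes (E : Finset (Finset V)) (f : V → ℝ) : Prop :=
  ∀ v, deg E v = 1 → f v = 0

/-- The first Dirichlet eigenvalue: infimum of Rayleigh quotients of nonzero
functions vanishing on the boundary. -/
noncomputable def firstEig (E : Finset (Finset V)) : ℝ :=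
  sInf {r : ℝ | ∃ f : V → ℝ, f ≠ 0 ∧ Vanishes E f ∧ r = rayleigh E f}

/-- The first Dirichlet eigenfunction: normalized, vanishing on the boundary,
positive on interior vertices, and an eigenfunction of the first eigenvalue. -/
noncomputable def IsFirstEigfun (E : Finset (Finset V)) (f : V → ℝ) : Prop :=
  (∑ v, (f v) ^ 2) = 1 ∧ Vanishes E f ∧ (∀ v, deg E v ≠ 1 → 0 < f v) ∧
  (∀ v, deg E v ≠ 1 → lap E f v = firstEig E * f v)

/-- The underlying simple graph of a hypergraph. -/
def toGraph (E : Finset (Finset V)) : SimpleGraph V where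
  Adj u v := u ≠ v ∧ ∃ e ∈ E, u ∈ e ∧ v ∈ e
  symm := by
    constructor
    rintro u v ⟨h, e, he, hu, hv⟩
    exact ⟨h.symm, e, he, hv, hu⟩
  loopless := by constructor; rintro u ⟨h, -⟩; exact h rfl

/-- The height of a vertex: distance to the root v0. -/
noncomputable def height (E : Finset (Finset V)) (v0 v : V) : ℕ := (toGraph E).dist v0 v

/-- Two hypergraphs have the same degree sequence. -/
def SameDegSeq (E E' : Finset (Finset V)) : Prop :=
  Multiset.map (deg E) Finset.univ.val = Multiset.map (deg E') Finset.univ.val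

/-- The Faber–Krahn property: minimal first Dirichlet eigenvalue among all
k-uniform supertrees with the same degree sequence. -/
noncomputable def FKProperty (k : ℕ) (E : Finset (Finset V)) : Prop :=
  IsSupertree k E ∧
  ∀ E' : Finset (Finset V), IsSupertree k E' → SameDegSeq E E' → firstEig E ≤ firstEig E'

/-- A spiral-like ordering (SLO-ordering) with root v0, encoded by an injective
rank function r; conditions (S1)–(S5). -/
def IsSLO (E : Finset (Finset V)) (v0 : V) (r : V → ℕ) : Prop :=
  Function.Injective r ∧ (∀ v, r v0 ≤ r v) ∧
  -- (S1)
  (∀ u v, r u < r v → height E v0 u ≤ height E v0 v) ∧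
  -- (S2)
  (∀ u v u1 v1 : V, (toGraph E).Adj u u1 → height E v0 u1 = height E v0 u + 1 →
     (toGraph E).Adj v v1 → height E v0 v1 = height E v0 v + 1 →
     r u < r v → r u1 < r v1) ∧
  -- (S3)
  (∀ u v, r u < r v → deg E u = 1 → deg E v = 1) ∧
  -- (S4): no vertex outside an edge lies between two non-minimal vertices of the edge
  (∀ e ∈ E, ∀ x ∈ e, ∀ y ∈ e, ∀ z : V, z ∉ e → r x < r z → r z < r y → ∀ w ∈ e, r x ≤ r w) ∧
  -- (S5)
  (∀ u v, deg E u ≠ 1 → deg E v ≠ 1 → r u < r v → deg E u ≤ deg E v)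

/-- A supertree admitting an SLO-ordering. -/
def HasSLO (E : Finset (Finset V)) : Prop := ∃ (v0 : V) (r : V → ℕ), IsSLO E v0 r

/-- Isomorphism of hypergraphs on the same vertex set. -/
def IsoHyper (E E' : Finset (Finset V)) : Prop :=
  ∃ σ : V ≃ V, E' = E.image (fun e => e.image σ)

set_option linter.unusedSectionVars false
section Aux
variable {V : Type*} [Fintype V] [DecidableEq V]

lemma adj_symm (E : Finset (Finset V)) (i j : V) : adjMat E i j = adjMat E j i := by
  unfold adjMat
  by_cases h : i = j
  · subst h; simp
  · rw [if_pos h, if_pos (Ne.symm h)]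
    congr 1
    exact Finset.filter_congr (fun e _ => by tauto)

lemma adj_nonneg (E : Finset (Finset V)) (k : ℕ) (hk : 2 ≤ k) (huni : ∀ e ∈ E, e.card = k)
    (i j : V) : 0 ≤ adjMat E i j := by
  unfold adjMat
  split
  · apply Finset.sum_nonneg
    intro e he
    have he' : e ∈ E := (Finset.mem_filter.mp he).1
    have h2 : (2:ℝ) ≤ e.card := by
      rw [huni e he']; exact_mod_cast hk
    have h1 : (0:ℝ) < (e.card:ℝ) - 1 := by linarith
    positivity
  · exact le_refl 0

lemma adj_pos (E : Finset (Finset V)) (k : ℕ) (hk : 2 ≤ k) (huni : ∀ e ∈ E, e.card = k)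
    (i j : V) (hij : i ≠ j) (e : Finset V) (he : e ∈ E) (hie : i ∈ e) (hje : j ∈ e) :
    0 < adjMat E i j := by
  unfold adjMat
  rw [if_pos hij]
  apply Finset.sum_pos'
  · intro e' he'
    have he'' : e' ∈ E := (Finset.mem_filter.mp he').1
    have h2 : (2:ℝ) ≤ e'.card := by rw [huni e' he'']; exact_mod_cast hk
    have h1 : (0:ℝ) < (e'.card:ℝ) - 1 := by linarith
    positivity
  · refine ⟨e, Finset.mem_filter.mpr ⟨he, hie, hje⟩, ?_⟩
    have h2 : (2:ℝ) ≤ e.card := by rw [huni e he]; exact_mod_cast hk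
    have h1 : (0:ℝ) < (e.card:ℝ) - 1 := by linarith
    positivity

lemma lap_smul (E : Finset (Finset V)) (c : ℝ) (f : V → ℝ) (i : V) :
    lap E (fun v => c * f v) i = c * lap E f i := by
  simp only [lap, mul_sub, Finset.mul_sum]
  congr 1
  · ring
  · exact Finset.sum_congr rfl fun j _ => by ring

lemma lap_add (E : Finset (Finset V)) (f g : V → ℝ) (i : V) :
    lap E (fun v => f v + g v) i = lap E f i + lap E g i := by
  simp only [lap]
  rw [Finset.sum_congr rfl (fun j (_ : j ∈ Finset.univ) => mul_add (adjMat E i j) (f j) (g j)),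
    Finset.sum_add_distrib]
  push_cast
  ring

lemma lap_sym (E : Finset (Finset V)) (f g : V → ℝ) :
    ∑ i, lap E f i * g i = ∑ i, lap E g i * f i := by
  unfold lap
  simp only [sub_mul, Finset.sum_sub_distrib, Finset.sum_mul]
  congr 1
  · exact Finset.sum_congr rfl fun i _ => by ring
  · rw [Finset.sum_comm]
    refine Finset.sum_congr rfl fun i _ => Finset.sum_congr rfl fun j _ => ?_
    rw [adj_symm E j i]; ring

end Aux
section Aux2
variable {V : Type*} [Fintype V] [DecidableEq V]

lemma edge_sq_expand (s : Finset V) (f : V → ℝ) :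
    ∑ i ∈ s, ∑ j ∈ s, (f i - f j)^2
      = 2 * (s.card:ℝ) * (∑ i ∈ s, f i ^ 2) - 2 * (∑ i ∈ s, f i)^2 := by
  have e3 : ∑ i ∈ s, ∑ j ∈ s, (f i * f j) = (∑ i ∈ s, f i)^2 := by
    rw [sq, Finset.sum_mul_sum]
  have e1 : ∀ i : V, ∑ _j ∈ s, f i^2 = (s.card:ℝ) * f i^2 := by
    intro i; rw [Finset.sum_const, nsmul_eq_mul]
  calc ∑ i ∈ s, ∑ j ∈ s, (f i - f j)^2
      = ∑ i ∈ s, ((∑ j ∈ s, f i^2) + (∑ j ∈ s, f j^2) - 2 * ∑ j ∈ s, (f i * f j)) := by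
        refine Finset.sum_congr rfl fun i _ => ?_
        rw [← Finset.sum_add_distrib, Finset.mul_sum, ← Finset.sum_sub_distrib]
        exact Finset.sum_congr rfl fun j _ => by ring
    _ = (∑ i ∈ s, (∑ j ∈ s, f i^2)) + (∑ i ∈ s, ∑ j ∈ s, f j^2)
          - 2 * ∑ i ∈ s, ∑ j ∈ s, (f i * f j) := by
        rw [← Finset.sum_add_distrib, Finset.mul_sum, ← Finset.sum_sub_distrib]
    _ = 2 * (s.card:ℝ) * (∑ i ∈ s, f i ^ 2) - 2 * (∑ i ∈ s, f i)^2 := by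
        rw [e3, Finset.sum_congr rfl (fun i _ => e1 i), ← Finset.mul_sum,
          Finset.sum_const, nsmul_eq_mul]
        ring

lemma edge_offdiag (s : Finset V) (f : V → ℝ) :
    ∑ i ∈ s, ∑ j ∈ s, (if i ≠ j then f i * f j else 0)
      = (∑ i ∈ s, f i)^2 - ∑ i ∈ s, f i^2 := by
  have e4 : ∀ i ∈ s, ∑ j ∈ s, (if i ≠ j then f i * f j else 0)
      = f i * (∑ j ∈ s, f j) - f i^2 := by
    intro i hi
    have h : ∀ j ∈ s, (if i ≠ j then f i * f j else 0)
        = f i * f j - (if i = j then f i * f j else 0) := by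
      intro j _; by_cases h : i = j <;> simp [h]
    rw [Finset.sum_congr rfl h, Finset.sum_sub_distrib, Finset.sum_ite_eq s i, if_pos hi,
      ← Finset.mul_sum]
    ring
  rw [Finset.sum_congr rfl e4, Finset.sum_sub_distrib, ← Finset.sum_mul, sq]

lemma edge_identity (s : Finset V) (h2 : 2 ≤ s.card) (f : V → ℝ) :
    (∑ i ∈ s, f i ^ 2) - (∑ i ∈ s, ∑ j ∈ s, if i ≠ j then f i * f j else 0) / ((s.card:ℝ) - 1)
      = (∑ i ∈ s, ∑ j ∈ s, (f i - f j)^2) / (2 * ((s.card:ℝ) - 1)) := by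
  have hc : (2:ℝ) ≤ (s.card:ℝ) := by exact_mod_cast h2
  have hd : ((s.card:ℝ) - 1) ≠ 0 := by linarith
  rw [edge_offdiag, edge_sq_expand]
  field_simp
  ring

lemma lapForm_edges (E : Finset (Finset V)) (hcard : ∀ e ∈ E, 2 ≤ e.card) (f : V → ℝ) :
    lapForm E f = ∑ e ∈ E, (∑ i ∈ e, ∑ j ∈ e, (f i - f j)^2) / (2 * ((e.card:ℝ) - 1)) := by
  have hdeg : ∀ i : V, ((deg E i : ℕ):ℝ) = ∑ e ∈ E, if i ∈ e then (1:ℝ) else 0 := by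
    intro i; rw [deg, Finset.card_filter]; push_cast [apply_ite (Nat.cast : ℕ → ℝ)]; rfl
  have step1 : ∑ i, (deg E i:ℝ) * f i * f i = ∑ e ∈ E, ∑ i ∈ e, f i^2 := by
    calc ∑ i, (deg E i:ℝ) * f i * f i
        = ∑ i, ∑ e ∈ E, (if i ∈ e then f i^2 else 0) := by
          refine Finset.sum_congr rfl fun i _ => ?_
          rw [hdeg i, Finset.sum_mul, Finset.sum_mul]
          refine Finset.sum_congr rfl fun e _ => ?_
          split <;> ring
      _ = ∑ e ∈ E, ∑ i, (if i ∈ e then f i ^2 else 0) := Finset.sum_comm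
      _ = ∑ e ∈ E, ∑ i ∈ e, f i^2 := by
          refine Finset.sum_congr rfl fun e _ => ?_
          rw [Finset.sum_ite_mem, Finset.univ_inter]
  have hadj : ∀ i j : V, adjMat E i j * f j * f i
      = ∑ e ∈ E, (if i ≠ j ∧ i ∈ e ∧ j ∈ e then f i * f j / ((e.card:ℝ)-1) else 0) := by
    intro i j
    by_cases h : i = j
    · subst h; simp [adjMat]
    · rw [adjMat, if_pos h, Finset.sum_filter, Finset.sum_mul, Finset.sum_mul]
      refine Finset.sum_congr rfl fun e _ => ?_
      by_cases h2 : i ∈ e ∧ j ∈ e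
      · rw [if_pos h2, if_pos ⟨h, h2⟩]; ring
      · rw [if_neg h2, if_neg (by tauto)]; ring
  have step2 : ∑ i, ∑ j, adjMat E i j * f j * f i
      = ∑ e ∈ E, (∑ i ∈ e, ∑ j ∈ e, if i ≠ j then f i * f j else 0) / ((e.card:ℝ)-1) := by
    calc ∑ i, ∑ j, adjMat E i j * f j * f i
        = ∑ i, ∑ e ∈ E, ∑ j, (if i ≠ j ∧ i ∈ e ∧ j ∈ e then f i * f j / ((e.card:ℝ)-1) else 0) := by
          refine Finset.sum_congr rfl fun i _ => ?_
          rw [Finset.sum_congr rfl fun j (_ : j ∈ Finset.univ) => hadj i j, Finset.sum_comm]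
      _ = ∑ e ∈ E, ∑ i, ∑ j, (if i ≠ j ∧ i ∈ e ∧ j ∈ e then f i * f j / ((e.card:ℝ)-1) else 0) :=
          Finset.sum_comm
      _ = ∑ e ∈ E, (∑ i ∈ e, ∑ j ∈ e, if i ≠ j then f i * f j else 0) / ((e.card:ℝ)-1) := by
          refine Finset.sum_congr rfl fun e _ => ?_
          rw [Finset.sum_div]
          rw [← Finset.sum_subset (Finset.subset_univ e) (fun i _ hi => by
            apply Finset.sum_eq_zero; intro j _; rw [if_neg (by tauto)])]
          refine Finset.sum_congr rfl fun i hi => ?_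
          rw [Finset.sum_div]
          rw [← Finset.sum_subset (Finset.subset_univ e) (fun j _ hj => by
            rw [if_neg (by tauto)])]
          refine Finset.sum_congr rfl fun j hj => ?_
          by_cases hij : i ≠ j
          · rw [if_pos ⟨hij, hi, hj⟩, if_pos hij]
          · rw [if_neg (by tauto), if_neg hij, zero_div]
  calc lapForm E f = ∑ i, (deg E i:ℝ) * f i * f i - ∑ i, ∑ j, adjMat E i j * f j * f i := by
        unfold lapForm lap
        rw [← Finset.sum_sub_distrib]
        refine Finset.sum_congr rfl fun i _ => ?_
        rw [sub_mul, Finset.sum_mul]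
    _ = ∑ e ∈ E, ((∑ i ∈ e, f i^2)
          - (∑ i ∈ e, ∑ j ∈ e, if i ≠ j then f i * f j else 0) / ((e.card:ℝ)-1)) := by
        rw [step1, step2, Finset.sum_sub_distrib]
    _ = ∑ e ∈ E, (∑ i ∈ e, ∑ j ∈ e, (f i - f j)^2) / (2 * ((e.card:ℝ) - 1)) :=
        Finset.sum_congr rfl fun e he => edge_identity e (hcard e he) f

end Aux2
section Aux3
variable {V : Type*} [Fintype V] [DecidableEq V]

lemma exists_edge (E : Finset (Finset V)) (hconn : HyperConnected E)
    (v1 v2 : V) (hne : v1 ≠ v2) : ∀ u, ∃ e ∈ E, u ∈ e := by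
  intro u
  have hw : ∃ w, w ≠ u := by
    by_cases h : v1 = u
    · exact ⟨v2, fun hc => hne (h ▸ hc ▸ rfl)⟩
    · exact ⟨v1, h⟩
  obtain ⟨w, hwu⟩ := hw
  rcases Relation.ReflTransGen.cases_head (hconn u w) with h1 | ⟨c, hc, -⟩
  · exact absurd h1.symm hwu
  · obtain ⟨-, e, he, hu, -⟩ := hc
    exact ⟨e, he, hu⟩

lemma boundary_unique_edge (E : Finset (Finset V)) (y : V) (hy : deg E y = 1)
    {e1 e2 : Finset V} (h1 : e1 ∈ E) (h2 : e2 ∈ E) (m1 : y ∈ e1) (m2 : y ∈ e2) : e1 = e2 := by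
  exact Finset.card_le_one.mp (le_of_eq hy) e1 (Finset.mem_filter.mpr ⟨h1, m1⟩)
    e2 (Finset.mem_filter.mpr ⟨h2, m2⟩)

lemma propagate (E : Finset (Finset V)) (hconn : HyperConnected E) (p : V → Prop)
    (hstep : ∀ x y, (∀ e ∈ E, x ∈ e → ∀ j ∈ e, p j) → HAdj E x y →
      (∀ e ∈ E, y ∈ e → ∀ j ∈ e, p j))
    (v0 : V) (hv0 : ∀ e ∈ E, v0 ∈ e → ∀ j ∈ e, p j) :
    ∀ u, ∀ e ∈ E, u ∈ e → ∀ j ∈ e, p j := by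
  intro u
  induction hconn v0 u with
  | refl => exact hv0
  | tail _ hbc ih => exact hstep _ _ ih hbc

lemma interior_zero_step (E : Finset (Finset V)) (k : ℕ) (hk : 2 ≤ k)
    (huni : ∀ e ∈ E, e.card = k) (μ : ℝ) (g : V → ℝ)
    (hgpos : ∀ v, 0 ≤ g v)
    (heig : ∀ v, deg E v ≠ 1 → lap E g v = μ * g v)
    (v : V) (hv : deg E v ≠ 1) (hgv : g v = 0) :
    ∀ e ∈ E, v ∈ e → ∀ j ∈ e, g j = 0 := by
  have h0 : ∑ j, adjMat E v j * g j = 0 := by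
    have h := heig v hv
    rw [lap, hgv] at h
    linarith
  have hterm := (Finset.sum_eq_zero_iff_of_nonneg
    (fun j (_ : j ∈ Finset.univ) => mul_nonneg (adj_nonneg E k hk huni v j) (hgpos j))).mp h0
  intro e he hve j hj
  by_cases hjv : j = v
  · rw [hjv]; exact hgv
  · have hA := adj_pos E k hk huni v j (fun hc => hjv hc.symm) e he hve hj
    rcases mul_eq_zero.mp (hterm j (Finset.mem_univ j)) with h | h
    · exact absurd h (ne_of_gt hA)
    · exact h

lemma zero_propagation (E : Finset (Finset V)) (k : ℕ) (hk : 2 ≤ k)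
    (huni : ∀ e ∈ E, e.card = k) (hconn : HyperConnected E)
    (hedge : ∀ u, ∃ e ∈ E, u ∈ e) (μ : ℝ) (g : V → ℝ)
    (hgpos : ∀ v, 0 ≤ g v)
    (heig : ∀ v, deg E v ≠ 1 → lap E g v = μ * g v)
    (v : V) (hv : deg E v ≠ 1) (hgv : g v = 0) : ∀ u, g u = 0 := by
  have hstep : ∀ x y, (∀ e ∈ E, x ∈ e → ∀ j ∈ e, g j = 0) → HAdj E x y →
      (∀ e ∈ E, y ∈ e → ∀ j ∈ e, g j = 0) := by
    intro x y Ix hxy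
    obtain ⟨hne, e1, he1, hx1, hy1⟩ := hxy
    have hgy : g y = 0 := Ix e1 he1 hx1 y hy1
    intro e2 he2 hy2 j hj
    by_cases hdy : deg E y = 1
    · have he12 : e2 = e1 := boundary_unique_edge E y hdy he2 he1 hy2 hy1
      exact Ix e1 he1 hx1 j (he12 ▸ hj)
    · exact interior_zero_step E k hk huni μ g hgpos heig y hdy hgy e2 he2 hy2 j hj
  have hall := propagate E hconn (fun u => g u = 0) hstep v
    (interior_zero_step E k hk huni μ g hgpos heig v hv hgv)
  intro u
  obtain ⟨e, he, hue⟩ := hedge u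
  exact hall u e he hue u hue

lemma const_propagation (E : Finset (Finset V)) (hconn : HyperConnected E)
    (hedge : ∀ u, ∃ e ∈ E, u ∈ e) (g : V → ℝ)
    (hconst : ∀ e ∈ E, ∀ i ∈ e, ∀ j ∈ e, g i = g j)
    (v1 : V) (hv1 : g v1 = 0) : ∀ u, g u = 0 := by
  have hstep : ∀ x y, (∀ e ∈ E, x ∈ e → ∀ j ∈ e, g j = 0) → HAdj E x y →
      (∀ e ∈ E, y ∈ e → ∀ j ∈ e, g j = 0) := by
    intro x y Ix hxy
    obtain ⟨hne, e1, he1, hx1, hy1⟩ := hxy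
    have hgy : g y = 0 := Ix e1 he1 hx1 y hy1
    intro e2 he2 hy2 j hj
    rw [hconst e2 he2 j hj y hy2, hgy]
  have hv0 : ∀ e ∈ E, v1 ∈ e → ∀ j ∈ e, g j = 0 := by
    intro e he hv1e j hj
    rw [hconst e he j hj v1 hv1e, hv1]
  have hall := propagate E hconn (fun u => g u = 0) hstep v1 hv0
  intro u
  obtain ⟨e, he, hue⟩ := hedge u
  exact hall u e he hue u hue

end Aux3
section Aux4
variable {V : Type*} [Fintype V] [DecidableEq V]

lemma sum_sq_pos (f : V → ℝ) (hf : f ≠ 0) : 0 < ∑ v, f v ^ 2 := by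
  obtain ⟨v, hv⟩ := Function.ne_iff.mp hf
  have h1 : 0 < f v ^ 2 := by
    have := mul_self_pos.mpr hv
    nlinarith
  exact Finset.sum_pos' (fun i _ => sq_nonneg (f i)) ⟨v, Finset.mem_univ v, h1⟩

lemma lapForm_nonneg (E : Finset (Finset V)) (hcard : ∀ e ∈ E, 2 ≤ e.card) (f : V → ℝ) :
    0 ≤ lapForm E f := by
  rw [lapForm_edges E hcard f]
  refine Finset.sum_nonneg fun e he => div_nonneg ?_ ?_
  · exact Finset.sum_nonneg fun i _ => Finset.sum_nonneg fun j _ => sq_nonneg _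
  · have : (2:ℝ) ≤ e.card := by exact_mod_cast hcard e he
    linarith

lemma lapForm_smul (E : Finset (Finset V)) (c : ℝ) (f : V → ℝ) :
    lapForm E (fun v => c * f v) = c ^ 2 * lapForm E f := by
  unfold lapForm
  rw [Finset.mul_sum]
  exact Finset.sum_congr rfl fun i _ => by rw [lap_smul]; ring

lemma lapForm_continuous (E : Finset (Finset V)) :
    Continuous fun f : V → ℝ => lapForm E f := by
  unfold lapForm lap
  refine continuous_finset_sum _ fun i _ => Continuous.mul (Continuous.sub ?_ ?_) (continuous_apply i)
  · exact continuous_const.mul (continuous_apply i)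
  · exact continuous_finset_sum _ fun j _ => continuous_const.mul (continuous_apply j)

lemma exists_min (E : Finset (Finset V))
    (hne : ∃ g : V → ℝ, Vanishes E g ∧ ∑ v, g v ^ 2 = 1) :
    ∃ g : V → ℝ, (Vanishes E g ∧ ∑ v, g v ^ 2 = 1) ∧
      ∀ h : V → ℝ, Vanishes E h → ∑ v, h v ^ 2 = 1 → lapForm E g ≤ lapForm E h := by
  set S : Set (V → ℝ) := {f | Vanishes E f ∧ ∑ v, (f v) ^ 2 = 1} with hSdef
  have h1 : IsClosed {f : V → ℝ | Vanishes E f} := by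
    have heq : {f : V → ℝ | Vanishes E f} = ⋂ v ∈ {v | deg E v = 1}, {f : V → ℝ | f v = 0} := by
      ext f; simp [Vanishes]
    rw [heq]
    exact isClosed_biInter fun v _ => isClosed_eq (continuous_apply v) continuous_const
  have hcont2 : Continuous fun f : V → ℝ => ∑ v, (f v) ^ 2 :=
    continuous_finset_sum _ fun v _ => (continuous_apply v).pow 2
  have h2 : IsClosed {f : V → ℝ | ∑ v, (f v) ^ 2 = 1} := isClosed_eq hcont2 continuous_const
  have hS : IsClosed S := IsClosed.inter h1 h2
  have hbdd : S ⊆ Set.pi Set.univ (fun _ => Set.Icc (-1:ℝ) 1) := by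
    rintro f ⟨-, hsum⟩ v -
    have hle : f v ^ 2 ≤ 1 :=
      hsum ▸ Finset.single_le_sum (fun i (_ : i ∈ Finset.univ) => sq_nonneg (f i)) (Finset.mem_univ v)
    constructor <;> nlinarith
  have hcomp : IsCompact S :=
    (isCompact_univ_pi fun _ => isCompact_Icc).of_isClosed_subset hS hbdd
  obtain ⟨g0, hg0⟩ := hne
  obtain ⟨g, hgS, hmin⟩ := hcomp.exists_isMinOn ⟨g0, hg0⟩
    (lapForm_continuous E).continuousOn
  exact ⟨g, hgS, fun h hv hs => hmin ⟨hv, hs⟩⟩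

lemma normalize_mem (E : Finset (Finset V)) (f : V → ℝ) (hf : f ≠ 0) (hvan : Vanishes E f) :
    ∃ g : V → ℝ, Vanishes E g ∧ (∑ v, g v ^ 2 = 1) ∧ lapForm E g = rayleigh E f := by
  set N := ∑ v, f v ^ 2 with hN
  have hNpos : 0 < N := sum_sq_pos f hf
  set c : ℝ := 1 / Real.sqrt N with hc
  refine ⟨fun v => c * f v, fun v hv => by simp only []; rw [hvan v hv, mul_zero], ?_, ?_⟩
  · have : ∑ v, (c * f v) ^ 2 = c ^ 2 * N := by
      rw [Finset.mul_sum]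
      exact Finset.sum_congr rfl fun v _ => by ring
    rw [this, hc]
    rw [div_pow, one_pow, Real.sq_sqrt hNpos.le]
    field_simp
  · rw [lapForm_smul, hc, div_pow, one_pow, Real.sq_sqrt hNpos.le, rayleigh]
    rw [div_mul_eq_mul_div, one_mul]

lemma eigSet_nonempty (E : Finset (Finset V)) (hi : ∃ v, deg E v ≠ 1) :
    ∃ g : V → ℝ, Vanishes E g ∧ ∑ v, g v ^ 2 = 1 := by
  obtain ⟨v, hv⟩ := hi
  refine ⟨fun u => if u = v then 1 else 0, ?_, ?_⟩
  · intro u hu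
    have : u ≠ v := fun hc => hv (hc ▸ hu)
    simp [this]
  · have hbody : ∀ u : V, (if u = v then (1:ℝ) else 0) ^ 2 = if u = v then 1 else 0 := by
      intro u; split <;> norm_num
    rw [Finset.sum_congr rfl fun u _ => hbody u]
    simp

end Aux4
section Aux5
variable {V : Type*} [Fintype V] [DecidableEq V]

lemma lapForm_zero_const (E : Finset (Finset V)) (hcard : ∀ e ∈ E, 2 ≤ e.card)
    (g : V → ℝ) (hQ : lapForm E g = 0) :
    ∀ e ∈ E, ∀ i ∈ e, ∀ j ∈ e, g i = g j := by
  rw [lapForm_edges E hcard g] at hQ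
  have hterm := (Finset.sum_eq_zero_iff_of_nonneg (fun e he => div_nonneg
    (Finset.sum_nonneg fun i _ => Finset.sum_nonneg fun j _ => sq_nonneg _)
    (by nlinarith [show (2:ℝ) ≤ e.card from by exact_mod_cast hcard e he]))).mp hQ
  intro e he i hi j hj
  have hd : (2 * ((e.card:ℝ) - 1)) ≠ 0 := by
    have : (2:ℝ) ≤ e.card := by exact_mod_cast hcard e he
    intro hc; nlinarith
  have hnum : ∑ i ∈ e, ∑ j ∈ e, (g i - g j) ^ 2 = 0 := by
    rcases div_eq_zero_iff.mp (hterm e he) with h | h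
    · exact h
    · exact absurd h hd
  have h1 := (Finset.sum_eq_zero_iff_of_nonneg (fun i _ =>
    Finset.sum_nonneg fun j _ => sq_nonneg (g i - g j))).mp hnum i hi
  have h2 := (Finset.sum_eq_zero_iff_of_nonneg (fun j _ => sq_nonneg (g i - g j))).mp h1 j hj
  have := pow_eq_zero_iff (n := 2) (by norm_num) |>.mp h2
  linarith

lemma firstEig_facts (E : Finset (Finset V)) (k : ℕ) (hk : 2 ≤ k)
    (huni : ∀ e ∈ E, e.card = k) (hconn : HyperConnected E)
    (hedge : ∀ u, ∃ e ∈ E, u ∈ e)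
    (hb : ∃ v, deg E v = 1) (hi : ∃ v, deg E v ≠ 1) :
    0 < firstEig E ∧ (∀ f : V → ℝ, f ≠ 0 → Vanishes E f → firstEig E ≤ rayleigh E f) := by
  have hcard : ∀ e ∈ E, 2 ≤ e.card := fun e he => (huni e he) ▸ hk
  obtain ⟨g, ⟨hgvan, hgnorm⟩, hgmin⟩ := exists_min E (eigSet_nonempty E hi)
  set m := lapForm E g with hm
  set R := {r : ℝ | ∃ f : V → ℝ, f ≠ 0 ∧ Vanishes E f ∧ r = rayleigh E f} with hR
  have hlow : ∀ r ∈ R, m ≤ r := by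
    rintro r ⟨f, hf0, hfvan, rfl⟩
    obtain ⟨g', h1, h2, h3⟩ := normalize_mem E f hf0 hfvan
    rw [← h3]
    exact hgmin g' h1 h2
  have hg0 : g ≠ 0 := by
    intro hc
    rw [hc] at hgnorm
    simp at hgnorm
  have hRne : R.Nonempty := ⟨rayleigh E g, g, hg0, hgvan, rfl⟩
  have hbddR : BddBelow R := ⟨m, hlow⟩
  have hge : m ≤ firstEig E := le_csInf hRne hlow
  have hmpos : 0 < m := by
    rcases lt_or_ge 0 m with h | h
    · exact h
    · exfalso
      have hQ0 : lapForm E g = 0 := le_antisymm h (lapForm_nonneg E hcard g)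
      have hconst := lapForm_zero_const E hcard g hQ0
      obtain ⟨v1, hv1⟩ := hb
      have hall := const_propagation E hconn hedge g
        (fun e he i hi j hj => hconst e he i hi j hj) v1 (hgvan v1 hv1)
      rw [Finset.sum_congr rfl (fun v _ => by rw [hall v]; norm_num : ∀ v ∈ Finset.univ, g v ^ 2 = 0)] at hgnorm
      simp at hgnorm
  exact ⟨lt_of_lt_of_le hmpos hge, fun f hf0 hfvan => csInf_le hbddR ⟨f, hf0, hfvan, rfl⟩⟩

end Aux5
section Aux6
variable {V : Type*} [Fintype V] [DecidableEq V]

lemma quad_coeff (a b : ℝ) (h : ∀ t : ℝ, 0 ≤ a * t ^ 2 + b * t) : b = 0 := by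
  have ha : 0 ≤ a := by have h1 := h 1; have h2 := h (-1); nlinarith
  have hpos : 0 < a + 1 := by linarith
  set q := b / (a + 1) with hqdef
  have hb : b = q * (a + 1) := by rw [hqdef]; field_simp
  have h3 := h (-q)
  have hbq : b * q = q ^ 2 * (a + 1) := by rw [hb]; ring
  have hq2 : q ^ 2 ≤ 0 := by nlinarith [h3, hbq]
  have hq0 : q = 0 := by nlinarith [sq_nonneg q]
  rw [hb, hq0, zero_mul]

lemma eigen_rayleigh (E : Finset (Finset V)) (μ : ℝ) (f : V → ℝ) (hvan : Vanishes E f)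
    (heig : ∀ v, deg E v ≠ 1 → lap E f v = μ * f v) :
    lapForm E f = μ * ∑ v, f v ^ 2 := by
  unfold lapForm
  rw [Finset.mul_sum]
  refine Finset.sum_congr rfl fun i _ => ?_
  by_cases h : deg E i = 1
  · rw [hvan i h]; ring
  · rw [heig i h]; ring

lemma lapForm_add_expand (E : Finset (Finset V)) (f h : V → ℝ) :
    lapForm E (fun u => f u + h u)
      = lapForm E f + lapForm E h + 2 * ∑ i, lap E f i * h i := by
  unfold lapForm
  rw [Finset.sum_congr rfl fun i (_ : i ∈ Finset.univ) => by rw [lap_add E f h i]]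
  have hbody : ∀ i ∈ Finset.univ, (lap E f i + lap E h i) * (f i + h i)
      = lap E f i * f i + lap E h i * h i + (lap E f i * h i + lap E h i * f i) := by
    intro i _; ring
  rw [Finset.sum_congr rfl hbody, Finset.sum_add_distrib, Finset.sum_add_distrib,
    Finset.sum_add_distrib, lap_sym E h f]
  ring

lemma lapForm_zero (E : Finset (Finset V)) : lapForm E (fun _ : V => (0:ℝ)) = 0 := by
  simp [lapForm, lap]

lemma min_eigen (E : Finset (Finset V)) (k : ℕ) (hk : 2 ≤ k)
    (huni : ∀ e ∈ E, e.card = k) (hconn : HyperConnected E)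
    (hedge : ∀ u, ∃ e ∈ E, u ∈ e)
    (hb : ∃ v, deg E v = 1) (hi : ∃ v, deg E v ≠ 1)
    (g : V → ℝ) (hg0 : g ≠ 0) (hgvan : Vanishes E g)
    (hQ : lapForm E g = firstEig E * ∑ v, g v ^ 2) :
    ∀ v, deg E v ≠ 1 → lap E g v = firstEig E * g v := by
  obtain ⟨-, hle⟩ := firstEig_facts E k hk huni hconn hedge hb hi
  intro v hv
  set lam := firstEig E with hlam
  set δ : V → ℝ := fun u => if u = v then (1:ℝ) else 0 with hδ
  have hδv : δ v = 1 := by rw [hδ]; simp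
  have hδsq : ∑ u, δ u ^ 2 = 1 := by
    rw [hδ]
    rw [Finset.sum_congr rfl fun u _ => (by split <;> norm_num :
      (if u = v then (1:ℝ) else 0) ^ 2 = if u = v then 1 else 0)]
    simp
  have hgδ : ∑ u, g u * δ u = g v := by
    rw [hδ]
    rw [Finset.sum_congr rfl fun u _ => (by split <;> simp [*] :
      g u * (if u = v then (1:ℝ) else 0) = if u = v then g u else 0)]
    simp
  have hlapδ : ∀ t : ℝ, ∑ i, lap E g i * (t * δ i) = t * lap E g v := by
    intro t
    rw [hδ]
    rw [Finset.sum_congr rfl fun i _ => (by split <;> simp [*] <;> ring :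
      lap E g i * (t * if i = v then (1:ℝ) else 0) = if i = v then t * lap E g i else 0)]
    simp
  -- key inequality
  have key : ∀ t : ℝ, 0 ≤ (lapForm E δ - lam) * t ^ 2 + (2 * (lap E g v - lam * g v)) * t := by
    intro t
    have hexp : lapForm E (fun u => g u + t * δ u)
        = lapForm E g + t ^ 2 * lapForm E δ + 2 * (t * lap E g v) := by
      rw [lapForm_add_expand E g (fun u => t * δ u), lapForm_smul E t δ, hlapδ t]
    have hnexp : ∑ u, (g u + t * δ u) ^ 2 = (∑ u, g u ^ 2) + 2 * t * g v + t ^ 2 := by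
      have hb2 : ∀ u ∈ Finset.univ, (g u + t * δ u) ^ 2
          = g u ^ 2 + (2 * t) * (g u * δ u) + t ^ 2 * δ u ^ 2 := fun u _ => by ring
      rw [Finset.sum_congr rfl hb2, Finset.sum_add_distrib, Finset.sum_add_distrib,
        ← Finset.mul_sum, ← Finset.mul_sum, hgδ, hδsq]
      ring
    have hineq : lam * (∑ u, (g u + t * δ u) ^ 2) ≤ lapForm E (fun u => g u + t * δ u) := by
      by_cases hz : (fun u => g u + t * δ u) = (0 : V → ℝ)
      · have h1 : lapForm E (fun u => g u + t * δ u) = 0 := by rw [hz]; exact lapForm_zero E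
        have h2 : ∑ u, (g u + t * δ u) ^ 2 = 0 := by
          refine Finset.sum_eq_zero fun u _ => ?_
          have hu := congrFun hz u
          simp only [Pi.zero_apply] at hu
          rw [hu]
          norm_num
        rw [h1, h2, mul_zero]
      · have hvan' : Vanishes E (fun u => g u + t * δ u) := by
          intro u hu
          have hne : u ≠ v := fun hc => hv (hc ▸ hu)
          simp only [hδ]
          rw [hgvan u hu, if_neg hne]
          ring
        have hray := hle _ hz hvan'
        have hN : 0 < ∑ u, (g u + t * δ u) ^ 2 := sum_sq_pos _ hz
        rw [rayleigh, le_div_iff₀ hN] at hray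
        linarith [hray]
    rw [hexp, hnexp] at hineq
    rw [hQ] at hineq
    nlinarith [hineq]
  have hb0 := quad_coeff _ _ key
  have : lap E g v - lam * g v = 0 := by linarith
  linarith

end Aux6
section Aux7
variable {V : Type*} [Fintype V] [DecidableEq V]

lemma abs_sub_sq_le (a b : ℝ) : (|a| - |b|) ^ 2 ≤ (a - b) ^ 2 := by
  have h1 : |(|a| - |b|)| ≤ |a - b| := abs_abs_sub_abs_le_abs_sub a b
  calc (|a| - |b|) ^ 2 = |(|a| - |b|)| ^ 2 := (sq_abs _).symm
    _ ≤ |a - b| ^ 2 := by nlinarith [abs_nonneg (|a| - |b|), abs_nonneg (a - b)]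
    _ = (a - b) ^ 2 := sq_abs _

lemma pipeline (E : Finset (Finset V)) (k : ℕ) (hk : 2 ≤ k)
    (huni : ∀ e ∈ E, e.card = k) (hconn : HyperConnected E)
    (hedge : ∀ u, ∃ e ∈ E, u ∈ e)
    (hb : ∃ v, deg E v = 1) (hi : ∃ v, deg E v ≠ 1)
    (f : V → ℝ) (hf0 : f ≠ 0) (hvan : Vanishes E f)
    (heig : ∀ v, deg E v ≠ 1 → lap E f v = firstEig E * f v) :
    (∀ e ∈ E, ∀ i ∈ e, ∀ j ∈ e, (|f i| - |f j|) ^ 2 = (f i - f j) ^ 2) ∧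
    (∀ v, deg E v ≠ 1 → f v ≠ 0) := by
  have hcard : ∀ e ∈ E, 2 ≤ e.card := fun e he => (huni e he) ▸ hk
  obtain ⟨hpos, hle⟩ := firstEig_facts E k hk huni hconn hedge hb hi
  set lam := firstEig E with hlam
  have hQf : lapForm E f = lam * ∑ v, f v ^ 2 := eigen_rayleigh E lam f hvan heig
  set g : V → ℝ := fun v => |f v| with hg
  have hgvan : Vanishes E g := fun v hv => by simp only [hg]; rw [hvan v hv, abs_zero]
  have hg0 : g ≠ 0 := by
    obtain ⟨v, hv⟩ := Function.ne_iff.mp hf0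
    exact Function.ne_iff.mpr ⟨v, by simp only [hg]; simpa using hv⟩
  have hNg : ∑ v, g v ^ 2 = ∑ v, f v ^ 2 :=
    Finset.sum_congr rfl fun v _ => by simp only [hg]; rw [sq_abs]
  have hdenom : ∀ e ∈ E, (0:ℝ) < 2 * ((e.card : ℝ) - 1) := by
    intro e he
    have : (2:ℝ) ≤ e.card := by exact_mod_cast hcard e he
    linarith
  have hinner_le : ∀ e : Finset V, ∀ i ∈ e,
      ∑ j ∈ e, (g i - g j) ^ 2 ≤ ∑ j ∈ e, (f i - f j) ^ 2 := by
    intro e i _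
    exact Finset.sum_le_sum fun j _ => by simp only [hg]; exact abs_sub_sq_le (f i) (f j)
  have houter_le : ∀ e : Finset V,
      ∑ i ∈ e, ∑ j ∈ e, (g i - g j) ^ 2 ≤ ∑ i ∈ e, ∑ j ∈ e, (f i - f j) ^ 2 :=
    fun e => Finset.sum_le_sum fun i hi => hinner_le e i hi
  have hterm_le : ∀ e ∈ E,
      (∑ i ∈ e, ∑ j ∈ e, (g i - g j) ^ 2) / (2 * ((e.card : ℝ) - 1))
        ≤ (∑ i ∈ e, ∑ j ∈ e, (f i - f j) ^ 2) / (2 * ((e.card : ℝ) - 1)) :=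
    fun e he => (div_le_div_iff_of_pos_right (hdenom e he)).mpr (houter_le e)
  have hQg_le : lapForm E g ≤ lapForm E f := by
    rw [lapForm_edges E hcard g, lapForm_edges E hcard f]
    exact Finset.sum_le_sum hterm_le
  have hrayg := hle g hg0 hgvan
  have hNpos : 0 < ∑ v, g v ^ 2 := sum_sq_pos g hg0
  rw [rayleigh, le_div_iff₀ hNpos] at hrayg
  have hQg : lapForm E g = lam * ∑ v, g v ^ 2 := by
    have h2 : lam * ∑ v, g v ^ 2 = lapForm E f := by rw [hNg, ← hQf]
    linarith
  have hQeq : lapForm E g = lapForm E f := by rw [hQg, hNg, ← hQf]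
  have hedge_eq : ∀ e ∈ E,
      (∑ i ∈ e, ∑ j ∈ e, (g i - g j) ^ 2) / (2 * ((e.card : ℝ) - 1))
        = (∑ i ∈ e, ∑ j ∈ e, (f i - f j) ^ 2) / (2 * ((e.card : ℝ) - 1)) := by
    rw [lapForm_edges E hcard g, lapForm_edges E hcard f] at hQeq
    exact (Finset.sum_eq_sum_iff_of_le hterm_le).mp hQeq
  have habs_eq : ∀ e ∈ E, ∀ i ∈ e, ∀ j ∈ e, (|f i| - |f j|) ^ 2 = (f i - f j) ^ 2 := by
    intro e he i hi j hj
    have h := hedge_eq e he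
    have hd : (2 * ((e.card : ℝ) - 1)) ≠ 0 := ne_of_gt (hdenom e he)
    have hAB : ∑ i ∈ e, ∑ j ∈ e, (g i - g j) ^ 2 = ∑ i ∈ e, ∑ j ∈ e, (f i - f j) ^ 2 :=
      (div_left_inj' hd).mp h
    have h1 := (Finset.sum_eq_sum_iff_of_le (fun i hi => hinner_le e i hi)).mp hAB i hi
    have h2 := (Finset.sum_eq_sum_iff_of_le (fun j _ => by
      simp only [hg]; exact abs_sub_sq_le (f i) (f j))).mp h1 j hj
    simpa only [hg] using h2
  have heigg := min_eigen E k hk huni hconn hedge hb hi g hg0 hgvan hQg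
  have hnz : ∀ v, deg E v ≠ 1 → f v ≠ 0 := by
    intro v hv hfv
    have hgv : g v = 0 := by simp only [hg]; rw [hfv, abs_zero]
    have hall := zero_propagation E k hk huni hconn hedge lam g
      (fun u => by simp only [hg]; exact abs_nonneg (f u)) heigg v hv hgv
    apply hf0
    funext u
    have hu := hall u
    simp only [hg] at hu
    exact abs_eq_zero.mp hu
  exact ⟨habs_eq, hnz⟩

lemma pos_spread (E : Finset (Finset V)) (hconn : HyperConnected E)
    (hedge : ∀ u, ∃ e ∈ E, u ∈ e) (f : V → ℝ)
    (hnz : ∀ v, deg E v ≠ 1 → f v ≠ 0)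
    (hedgeq : ∀ e ∈ E, ∀ i ∈ e, ∀ j ∈ e, (|f i| - |f j|) ^ 2 = (f i - f j) ^ 2)
    (v0 : V) (hfv0 : 0 < f v0) :
    ∀ w, deg E w ≠ 1 → 0 < f w := by
  have hmix : ∀ e ∈ E, ∀ i ∈ e, ∀ j ∈ e, 0 < f i → 0 ≤ f j := by
    intro e he i hi j hj hfi
    by_contra hneg
    push_neg at hneg
    have h := hedgeq e he i hi j hj
    rw [abs_of_pos hfi, abs_of_neg hneg] at h
    nlinarith
  have hstep : ∀ x y, (∀ e ∈ E, x ∈ e → ∀ j ∈ e, 0 ≤ f j) → HAdj E x y →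
      (∀ e ∈ E, y ∈ e → ∀ j ∈ e, 0 ≤ f j) := by
    intro x y Ix hxy
    obtain ⟨hne, e1, he1, hx1, hy1⟩ := hxy
    have hfy : 0 ≤ f y := Ix e1 he1 hx1 y hy1
    intro e2 he2 hy2 j hj
    by_cases hdy : deg E y = 1
    · have he12 : e2 = e1 := boundary_unique_edge E y hdy he2 he1 hy2 hy1
      exact Ix e1 he1 hx1 j (he12 ▸ hj)
    · exact hmix e2 he2 y hy2 j hj (lt_of_le_of_ne hfy (Ne.symm (hnz y hdy)))
  have hanchor : ∀ e ∈ E, v0 ∈ e → ∀ j ∈ e, 0 ≤ f j :=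
    fun e he hv0e j hj => hmix e he v0 hv0e j hj hfv0
  have hall := propagate E hconn (fun j => 0 ≤ f j) hstep v0 hanchor
  intro w hw
  obtain ⟨e, he, hwe⟩ := hedge w
  exact lt_of_le_of_ne (hall w e he hwe w hwe) (Ne.symm (hnz w hw))

end Aux7

/-- The first Dirichlet eigenvalue of a k-uniform supertree with
boundary is positive and simple, and every corresponding eigenfunction is
strictly positive on all interior vertices or strictly negative on all interior
vertices. -/
theorem firstEig_pos_simple_sign (k : ℕ) (hk : 2 ≤ k)
    (E : Finset (Finset V)) (h : IsSupertree k E)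
    (hb : ∃ v, deg E v = 1) (hi : ∃ v, deg E v ≠ 1) :
    0 < firstEig E ∧
    (∀ f g : V → ℝ,
      f ≠ 0 → Vanishes E f → (∀ v, deg E v ≠ 1 → lap E f v = firstEig E * f v) →
      g ≠ 0 → Vanishes E g → (∀ v, deg E v ≠ 1 → lap E g v = firstEig E * g v) →
      ∃ c : ℝ, g = fun v => c * f v) ∧
    (∀ f : V → ℝ,
      f ≠ 0 → Vanishes E f → (∀ v, deg E v ≠ 1 → lap E f v = firstEig E * f v) →
      (∀ v, deg E v ≠ 1 → 0 < f v) ∨ (∀ v, deg E v ≠ 1 → f v < 0)) := by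
  obtain ⟨huni, hconn, -⟩ := h
  obtain ⟨v1, hv1⟩ := hb
  obtain ⟨v2, hv2⟩ := hi
  have hne12 : v1 ≠ v2 := fun hc => hv2 (hc ▸ hv1)
  have hedge : ∀ u, ∃ e ∈ E, u ∈ e := exists_edge E hconn v1 v2 hne12
  have hb' : ∃ v, deg E v = 1 := ⟨v1, hv1⟩
  have hi' : ∃ v, deg E v ≠ 1 := ⟨v2, hv2⟩
  obtain ⟨hpos, -⟩ := firstEig_facts E k hk huni hconn hedge hb' hi'
  refine ⟨hpos, ?_, ?_⟩
  · -- simplicity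
    intro f g hf0 hfvan hfeig hg0 hgvan hgeig
    obtain ⟨hfedge, hfnz⟩ := pipeline E k hk huni hconn hedge hb' hi' f hf0 hfvan hfeig
    have hfv2 : f v2 ≠ 0 := hfnz v2 hv2
    set c : ℝ := g v2 / f v2 with hc
    by_cases hh : (fun v => g v + (-c) * f v) = (0 : V → ℝ)
    · refine ⟨c, funext fun v => ?_⟩
      have hzv := congrFun hh v
      simp only [Pi.zero_apply] at hzv
      linarith
    · exfalso
      have hhvan : Vanishes E (fun v => g v + (-c) * f v) := by
        intro v hv
        simp only []
        rw [hgvan v hv, hfvan v hv]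
        ring
      have hheig : ∀ v, deg E v ≠ 1 →
          lap E (fun v => g v + (-c) * f v) v = firstEig E * (g v + (-c) * f v) := by
        intro v hv
        rw [lap_add E g (fun v => (-c) * f v) v, lap_smul E (-c) f v, hgeig v hv, hfeig v hv]
        ring
      obtain ⟨-, hhnz⟩ := pipeline E k hk huni hconn hedge hb' hi' _ hh hhvan hheig
      apply hhnz v2 hv2
      show g v2 + (-c) * f v2 = 0
      rw [hc, neg_mul, div_mul_cancel₀ _ hfv2]
      ring
  · -- sign
    intro f hf0 hfvan hfeig
    obtain ⟨hfedge, hfnz⟩ := pipeline E k hk huni hconn hedge hb' hi' f hf0 hfvan hfeig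
    rcases lt_trichotomy (f v2) 0 with hneg | hzero | hpos2
    · right
      intro v hv
      have hq : ∀ e ∈ E, ∀ i ∈ e, ∀ j ∈ e,
          (|(fun v => -f v) i| - |(fun v => -f v) j|) ^ 2
            = ((fun v => -f v) i - (fun v => -f v) j) ^ 2 := by
        intro e he i hi j hj
        simp only [abs_neg]
        rw [hfedge e he i hi j hj]
        ring
      have hspread := pos_spread E hconn hedge (fun v => -f v)
        (fun v hv => neg_ne_zero.mpr (hfnz v hv)) hq v2 (by show (0:ℝ) < -f v2; linarith) v hv
      have hspread' : (0:ℝ) < -f v := hspread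
      linarith
    · exact absurd hzero (hfnz v2 hv2)
    · exact Or.inl fun v hv => pos_spread E hconn hedge f hfnz hfedge v2 hpos2 v hv
end

section
/- Switching identity: let G be a k-uniform hypergraph, e_1 = {u_1,...,u_k}, e_2 = {v_1,...,v_k} edges with all 2k vertices distinct, 1 ≤ l ≤ k-1, and let G' be obtained by replacing e_1, e_2 with e_1' = {v_1,...,v_l, u_{l+1},...,u_k} and e_2' = {u_1,...,u_l, v_{l+1},...,v_k}. Then for every real function f on V, ⟨L_{G'} f, f⟩ - ⟨L_G f, f⟩ = (2/(k-1)) · (Σ_{i=1}^l f(v_i) - Σ_{i=1}^l f(u_i)) · (Σ_{j=l+1}^k f(v_j) - Σ_{j=l+1}^k f(u_j)). -/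
open Finset

variable {V : Type*} [Fintype V] [DecidableEq V]

noncomputable def edgeQ (f : V → ℝ) (e : Finset V) : ℝ :=
  (∑ i ∈ e, f i ^ 2) - (1 / ((e.card : ℝ) - 1)) * ((∑ i ∈ e, f i) ^ 2 - ∑ i ∈ e, f i ^ 2)

theorem lapForm_edge_sum (E : Finset (Finset V)) (f : V → ℝ) :
    lapForm E f = ∑ e ∈ E, edgeQ f e := by
  have h1 : ∀ i : V, (deg E i : ℝ) = ∑ e ∈ E, if i ∈ e then (1:ℝ) else 0 := by
    intro i
    rw [deg, Finset.card_filter]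
    push_cast
    exact Finset.sum_congr rfl fun e _ => by split <;> simp
  have h2 : ∀ i : V, (∑ j, adjMat E i j * f j)
      = ∑ e ∈ E, if i ∈ e then (1 / ((e.card : ℝ) - 1)) * ((∑ j ∈ e, f j) - f i) else 0 := by
    intro i
    have key : ∀ j : V, adjMat E i j * f j
        = ∑ e ∈ E, (if i ∈ e ∧ j ∈ e ∧ i ≠ j then (1 / ((e.card : ℝ) - 1)) * f j else 0) := by
      intro j
      by_cases hij : i = j
      · simp [adjMat, hij]
      · simp only [adjMat, if_pos hij, Finset.sum_filter, Finset.sum_mul]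
        refine Finset.sum_congr rfl fun e _ => ?_
        by_cases h : i ∈ e ∧ j ∈ e <;> simp [h, hij, and_assoc]
    rw [Finset.sum_congr rfl fun j _ => key j, Finset.sum_comm]
    refine Finset.sum_congr rfl fun e _ => ?_
    by_cases hie : i ∈ e
    · simp only [hie, true_and, if_true]
      have e1 : (∑ j : V, if j ∈ e ∧ i ≠ j then (1 / ((e.card : ℝ) - 1)) * f j else 0)
          = ∑ j ∈ e.erase i, (1 / ((e.card : ℝ) - 1)) * f j := by
        rw [← Finset.sum_filter]
        congr 1
        ext x
        simp [Finset.mem_erase, and_comm, ne_comm, eq_comm]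
      rw [e1, ← Finset.mul_sum, Finset.sum_erase_eq_sub hie]
    · simp [hie]
  unfold lapForm lap
  calc (∑ i, ((deg E i : ℝ) * f i - ∑ j, adjMat E i j * f j) * f i)
      = ∑ i, ∑ e ∈ E, ((if i ∈ e then (1:ℝ) else 0) * f i
          - if i ∈ e then (1 / ((e.card : ℝ) - 1)) * ((∑ j ∈ e, f j) - f i) else 0) * f i := by
        refine Finset.sum_congr rfl fun i _ => ?_
        rw [h1 i, h2 i, ← Finset.sum_mul, Finset.sum_sub_distrib, Finset.sum_mul]
    _ = ∑ e ∈ E, edgeQ f e := by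
        rw [Finset.sum_comm]
        refine Finset.sum_congr rfl fun e _ => ?_
        have step : ∀ i : V, ((if i ∈ e then (1:ℝ) else 0) * f i
            - if i ∈ e then (1 / ((e.card : ℝ) - 1)) * ((∑ j ∈ e, f j) - f i) else 0) * f i
            = if i ∈ e then f i ^ 2 - (1 / ((e.card : ℝ) - 1)) * (((∑ j ∈ e, f j) - f i) * f i) else 0 := by
          intro i
          by_cases h : i ∈ e <;> simp [h] <;> ring
        rw [Finset.sum_congr rfl fun i _ => step i, Finset.sum_ite_mem, Finset.univ_inter,
          Finset.sum_sub_distrib, ← Finset.mul_sum, edgeQ]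
        congr 2
        have : ∑ i ∈ e, ((∑ j ∈ e, f j) - f i) * f i
            = (∑ j ∈ e, f j) * (∑ i ∈ e, f i) - ∑ i ∈ e, f i ^ 2 := by
          rw [Finset.mul_sum, ← Finset.sum_sub_distrib]
          exact Finset.sum_congr rfl fun i _ => by ring
        rw [this, sq]

/-- the switching identity. Exchanging {u_1,…,u_l} ⊆ e_1 with
{v_1,…,v_l} ⊆ e_2 changes the Laplacian quadratic form by
(2/(k-1))·(Σ_{i≤l} f(v_i) - Σ_{i≤l} f(u_i))·(Σ_{j>l} f(v_j) - Σ_{j>l} f(u_j)). -/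
theorem switching_identity (k l : ℕ) (hk : 2 ≤ k) (hl1 : 1 ≤ l) (hl2 : l ≤ k - 1)
    (E : Finset (Finset V)) (hu : ∀ e ∈ E, e.card = k)
    (u v : Fin k → V) (hui : Function.Injective u) (hvi : Function.Injective v)
    (huv : ∀ i j, u i ≠ v j)
    (he1 : Finset.image u Finset.univ ∈ E) (he2 : Finset.image v Finset.univ ∈ E)
    (hne1 : ((Finset.univ.filter (fun i : Fin k => (i : ℕ) < l)).image v ∪
              ((Finset.univ.filter (fun i : Fin k => (i : ℕ) < l))ᶜ).image u) ∉ E)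
    (hne2 : ((Finset.univ.filter (fun i : Fin k => (i : ℕ) < l)).image u ∪
              ((Finset.univ.filter (fun i : Fin k => (i : ℕ) < l))ᶜ).image v) ∉ E)
    (f : V → ℝ) :
    lapForm ((E \ {Finset.image u Finset.univ, Finset.image v Finset.univ}) ∪
        {(Finset.univ.filter (fun i : Fin k => (i : ℕ) < l)).image v ∪
            ((Finset.univ.filter (fun i : Fin k => (i : ℕ) < l))ᶜ).image u,
          (Finset.univ.filter (fun i : Fin k => (i : ℕ) < l)).image u ∪
            ((Finset.univ.filter (fun i : Fin k => (i : ℕ) < l))ᶜ).image v}) f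
      - lapForm E f
      = (2 / ((k : ℝ) - 1)) *
          ((∑ i ∈ Finset.univ.filter (fun i : Fin k => (i : ℕ) < l), f (v i)) -
            ∑ i ∈ Finset.univ.filter (fun i : Fin k => (i : ℕ) < l), f (u i)) *
          ((∑ i ∈ (Finset.univ.filter (fun i : Fin k => (i : ℕ) < l))ᶜ, f (v i)) -
            ∑ i ∈ (Finset.univ.filter (fun i : Fin k => (i : ℕ) < l))ᶜ, f (u i)) := by
  classical
  set L : Finset (Fin k) := Finset.univ.filter (fun i : Fin k => (i : ℕ) < l) with hL
  set e1 : Finset V := Finset.image u Finset.univ with he1d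
  set e2 : Finset V := Finset.image v Finset.univ with he2d
  set e1' : Finset V := L.image v ∪ Lᶜ.image u with he1'd
  set e2' : Finset V := L.image u ∪ Lᶜ.image v with he2'd
  have hlk : l ≤ k := le_trans hl2 (Nat.sub_le k 1)
  have hLcard : L.card = l := by
    have h : L = (Finset.range l).attachFin
        (fun m hm => lt_of_lt_of_le (Finset.mem_range.mp hm) hlk) := by
      ext i; simp [hL, Finset.mem_attachFin]
    rw [h, Finset.card_attachFin, Finset.card_range]
  have hLccard : Lᶜ.card = k - l := by
    rw [Finset.card_compl, hLcard]; simp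
  -- disjointness of u-images and v-images
  have hdisj_uv : ∀ (s t : Finset (Fin k)), Disjoint (s.image u) (t.image v) := by
    intro s t
    rw [Finset.disjoint_left]
    rintro a ha hb
    obtain ⟨i, -, rfl⟩ := Finset.mem_image.mp ha
    obtain ⟨j, -, hj⟩ := Finset.mem_image.mp hb
    exact huv i j hj.symm
  -- nonempty index, small witness
  have h0l : (0 : ℕ) < l := hl1
  have h0k : (0 : ℕ) < k := by omega
  have hz : (⟨0, h0k⟩ : Fin k) ∈ L := by simp [hL, h0l]
  -- e1 ≠ e2
  have h12 : e1 ≠ e2 := by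
    intro h
    have : u ⟨0, h0k⟩ ∈ e2 := h ▸ (Finset.mem_image_of_mem u (Finset.mem_univ _))
    obtain ⟨j, -, hj⟩ := Finset.mem_image.mp this
    exact huv _ j hj.symm
  -- e1' ≠ e2'
  have h12' : e1' ≠ e2' := by
    intro h
    have hv0 : v ⟨0, h0k⟩ ∈ e1' := Finset.mem_union_left _ (Finset.mem_image_of_mem v hz)
    rw [h] at hv0
    rcases Finset.mem_union.mp hv0 with h' | h'
    · obtain ⟨j, -, hj⟩ := Finset.mem_image.mp h'
      exact huv j _ hj
    · obtain ⟨j, hjc, hj⟩ := Finset.mem_image.mp h'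
      have : j = ⟨0, h0k⟩ := hvi hj
      rw [this] at hjc
      exact (Finset.mem_compl.mp hjc) hz
  -- sums over the edges
  have himg : ∀ (g : V → ℝ) (w : Fin k → V), Function.Injective w → ∀ s : Finset (Fin k),
      ∑ x ∈ s.image w, g x = ∑ i ∈ s, g (w i) := by
    intro g w hw s
    exact Finset.sum_image (fun a _ b _ h => hw h)
  have hsplit : ∀ (g : V → ℝ) (w w' : Fin k → V), Function.Injective w → Function.Injective w' →
      Disjoint (L.image w) (Lᶜ.image w') →
      ∑ x ∈ (L.image w ∪ Lᶜ.image w'), g x = (∑ i ∈ L, g (w i)) + ∑ i ∈ Lᶜ, g (w' i) := by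
    intro g w w' hw hw' hd
    rw [Finset.sum_union hd, himg g w hw, himg g w' hw']
  -- edge cards
  have hcard1 : e1.card = k := hu _ he1
  have hcard2 : e2.card = k := hu _ he2
  have hcard1' : e1'.card = k := by
    rw [he1'd, Finset.card_union_of_disjoint (hdisj_uv _ _).symm,
      Finset.card_image_of_injective _ hvi, Finset.card_image_of_injective _ hui,
      hLcard, hLccard]
    omega
  have hcard2' : e2'.card = k := by
    rw [he2'd, Finset.card_union_of_disjoint (hdisj_uv _ _),
      Finset.card_image_of_injective _ hui, Finset.card_image_of_injective _ hvi,
      hLcard, hLccard]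
    omega
  -- decompose the sums over edge sets
  have hsub : ({e1, e2} : Finset (Finset V)) ⊆ E := by
    intro x hx
    rcases Finset.mem_insert.mp hx with rfl | hx
    · exact he1
    · rw [Finset.mem_singleton.mp hx]; exact he2
  have hdisjE : Disjoint (E \ {e1, e2}) ({e1', e2'} : Finset (Finset V)) := by
    rw [Finset.disjoint_right]
    intro x hx hx'
    rcases Finset.mem_insert.mp hx with rfl | hx
    · exact hne1 (Finset.mem_sdiff.mp hx').1
    · rw [Finset.mem_singleton.mp hx] at hx'
      exact hne2 (Finset.mem_sdiff.mp hx').1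
  rw [lapForm_edge_sum, lapForm_edge_sum, Finset.sum_union hdisjE,
    ← Finset.sum_sdiff hsub, Finset.sum_pair h12, Finset.sum_pair h12']
  have hk1 : ((k : ℝ) - 1) ≠ 0 := by
    have : (2 : ℝ) ≤ (k : ℝ) := by exact_mod_cast hk
    linarith
  have hQ1 : edgeQ f e1 = ((∑ i ∈ L, f (u i) ^ 2) + ∑ i ∈ Lᶜ, f (u i) ^ 2)
      - 1 / ((k : ℝ) - 1) * (((∑ i ∈ L, f (u i)) + ∑ i ∈ Lᶜ, f (u i)) ^ 2
        - ((∑ i ∈ L, f (u i) ^ 2) + ∑ i ∈ Lᶜ, f (u i) ^ 2)) := by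
    rw [edgeQ, hcard1, he1d, himg _ u hui, himg _ u hui,
      ← Finset.sum_add_sum_compl L (fun i => f (u i)),
      ← Finset.sum_add_sum_compl L (fun i => f (u i) ^ 2)]
  have hQ2 : edgeQ f e2 = ((∑ i ∈ L, f (v i) ^ 2) + ∑ i ∈ Lᶜ, f (v i) ^ 2)
      - 1 / ((k : ℝ) - 1) * (((∑ i ∈ L, f (v i)) + ∑ i ∈ Lᶜ, f (v i)) ^ 2
        - ((∑ i ∈ L, f (v i) ^ 2) + ∑ i ∈ Lᶜ, f (v i) ^ 2)) := by
    rw [edgeQ, hcard2, he2d, himg _ v hvi, himg _ v hvi,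
      ← Finset.sum_add_sum_compl L (fun i => f (v i)),
      ← Finset.sum_add_sum_compl L (fun i => f (v i) ^ 2)]
  have hQ1' : edgeQ f e1' = ((∑ i ∈ L, f (v i) ^ 2) + ∑ i ∈ Lᶜ, f (u i) ^ 2)
      - 1 / ((k : ℝ) - 1) * (((∑ i ∈ L, f (v i)) + ∑ i ∈ Lᶜ, f (u i)) ^ 2
        - ((∑ i ∈ L, f (v i) ^ 2) + ∑ i ∈ Lᶜ, f (u i) ^ 2)) := by
    rw [edgeQ, hcard1', he1'd, hsplit _ v u hvi hui (hdisj_uv _ _).symm,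
      hsplit _ v u hvi hui (hdisj_uv _ _).symm]
  have hQ2' : edgeQ f e2' = ((∑ i ∈ L, f (u i) ^ 2) + ∑ i ∈ Lᶜ, f (v i) ^ 2)
      - 1 / ((k : ℝ) - 1) * (((∑ i ∈ L, f (u i)) + ∑ i ∈ Lᶜ, f (v i)) ^ 2
        - ((∑ i ∈ L, f (u i) ^ 2) + ∑ i ∈ Lᶜ, f (v i) ^ 2)) := by
    rw [edgeQ, hcard2', he2'd, hsplit _ u v hui hvi (hdisj_uv _ _),
      hsplit _ u v hui hvi (hdisj_uv _ _)]
  have key : edgeQ f e1' + edgeQ f e2' - (edgeQ f e1 + edgeQ f e2)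
      = (2 / ((k : ℝ) - 1)) *
          ((∑ i ∈ L, f (v i)) - ∑ i ∈ L, f (u i)) *
          ((∑ i ∈ Lᶜ, f (v i)) - ∑ i ∈ Lᶜ, f (u i)) := by
    rw [hQ1, hQ2, hQ1', hQ2']
    field_simp
    ring
  linarith [key]
end

section
/- Shifting identity: let G be a k-uniform hypergraph, F a set of r edges each containing a vertex u, and v a vertex with v ∉ e for every e ∈ F. Let G' be obtained by replacing each e ∈ F with (e∖{u})∪{v}. Then for every real function f on V, ⟨L_{G'} f, f⟩ - ⟨L_G f, f⟩ = (1/(k-1)) · Σ_{e∈F} Σ_{w∈e∖{u}} (f(v) - f(u))(f(v) + f(u) - 2 f(w)). -/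
open Finset

variable {V : Type*} [Fintype V] [DecidableEq V]

lemma pair_sum (s : Finset V) (f : V → ℝ) :
    ∑ i ∈ s, ∑ j ∈ s.erase i, f i * f j = (∑ i ∈ s, f i)^2 - ∑ i ∈ s, f i ^ 2 := by
  have h : ∀ i ∈ s, ∑ j ∈ s.erase i, f i * f j = f i * (∑ j ∈ s, f j) - f i ^ 2 := by
    intro i hi
    rw [← Finset.mul_sum, Finset.sum_erase_eq_sub hi, mul_sub, sq]
  rw [Finset.sum_congr rfl h, Finset.sum_sub_distrib, ← Finset.sum_mul, sq]

lemma adj_expand (E : Finset (Finset V)) (i j : V) :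
    adjMat E i j = ∑ e ∈ E, if i ∈ e ∧ j ∈ e.erase i then 1 / ((e.card : ℝ) - 1) else 0 := by
  unfold adjMat
  split_ifs with h
  · rw [Finset.sum_filter]
    refine Finset.sum_congr rfl fun e _ => ?_
    congr 1
    simp only [Finset.mem_erase, eq_iff_iff]
    constructor
    · rintro ⟨hi, hj⟩; exact ⟨hi, Ne.symm h, hj⟩
    · rintro ⟨hi, _, hj⟩; exact ⟨hi, hj⟩
  · push_neg at h
    subst h
    symm
    refine Finset.sum_eq_zero fun e _ => ?_
    rw [if_neg]
    rintro ⟨_, hj⟩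
    exact (Finset.mem_erase.mp hj).1 rfl

lemma lapForm_edge (E : Finset (Finset V)) (f : V → ℝ) :
    lapForm E f = ∑ e ∈ E,
      ((∑ i ∈ e, f i ^ 2) - (1 / ((e.card : ℝ) - 1)) * ((∑ i ∈ e, f i) ^ 2 - ∑ i ∈ e, f i ^ 2)) := by
  unfold lapForm lap
  simp only [sub_mul, Finset.sum_sub_distrib]
  have h1 : ∑ i, (deg E i : ℝ) * f i * f i = ∑ e ∈ E, ∑ i ∈ e, f i ^ 2 := by
    have hd : ∀ i : V, ((deg E i : ℕ) : ℝ) = ∑ e ∈ E, if i ∈ e then (1:ℝ) else 0 := by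
      intro i
      rw [Finset.sum_boole]
      unfold deg
      norm_num
    simp only [hd, Finset.sum_mul]
    rw [Finset.sum_comm]
    refine Finset.sum_congr rfl fun e _ => ?_
    simp only [ite_mul, one_mul, zero_mul]
    rw [Finset.sum_ite_mem, Finset.univ_inter]
    exact Finset.sum_congr rfl fun i _ => by ring
  have h2 : ∑ i, (∑ j, adjMat E i j * f j) * f i
      = ∑ e ∈ E, (1 / ((e.card : ℝ) - 1)) * ((∑ i ∈ e, f i) ^ 2 - ∑ i ∈ e, f i ^ 2) := by
    simp only [adj_expand, Finset.sum_mul, ite_mul, zero_mul]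
    have swap1 : ∀ i : V, (∑ j : V, ∑ e ∈ E, if i ∈ e ∧ j ∈ e.erase i then
        1 / ((e.card : ℝ) - 1) * f j * f i else 0)
        = ∑ e ∈ E, ∑ j : V, if i ∈ e ∧ j ∈ e.erase i then
        1 / ((e.card : ℝ) - 1) * f j * f i else 0 := fun i => Finset.sum_comm
    simp only [swap1]
    rw [Finset.sum_comm]
    refine Finset.sum_congr rfl fun e _ => ?_
    have hstep : ∀ i : V, (∑ j, if i ∈ e ∧ j ∈ e.erase i then
        1 / ((e.card : ℝ) - 1) * f j * f i else 0)
        = if i ∈ e then (1 / ((e.card : ℝ) - 1)) * ∑ j ∈ e.erase i, f i * f j else 0 := by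
      intro i
      by_cases hi : i ∈ e
      · simp only [hi, true_and, if_true]
        rw [Finset.sum_ite_mem, Finset.univ_inter, Finset.mul_sum]
        exact Finset.sum_congr rfl fun j _ => by ring
      · simp [hi]
    simp only [hstep]
    rw [Finset.sum_ite_mem, Finset.univ_inter, ← Finset.mul_sum, pair_sum]
  rw [h1, h2]

/-- the shifting identity. Replacing each edge e ∈ F (all
containing u, none containing x) by (e∖{u})∪{x} changes the quadratic form by
(1/(k-1))·Σ_{e∈F} Σ_{w∈e∖{u}} (f(x)-f(u))(f(x)+f(u)-2f(w)). -/
theorem shifting_identity (k : ℕ) (hk : 2 ≤ k)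
    (E : Finset (Finset V)) (hu : ∀ e ∈ E, e.card = k)
    (F : Finset (Finset V)) (hF : F ⊆ E) (u x : V)
    (huF : ∀ e ∈ F, u ∈ e) (hxF : ∀ e ∈ F, x ∉ e)
    (hnew : ∀ e ∈ F, insert x (e.erase u) ∉ E)
    (f : V → ℝ) :
    lapForm ((E \ F) ∪ F.image (fun e => insert x (e.erase u))) f - lapForm E f
      = (1 / ((k : ℝ) - 1)) * ∑ e ∈ F, ∑ w ∈ e.erase u,
          (f x - f u) * (f x + f u - 2 * f w) := by
  set φ : Finset V → ℝ := fun e =>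
    ((∑ i ∈ e, f i ^ 2) - (1 / ((e.card : ℝ) - 1)) * ((∑ i ∈ e, f i) ^ 2 - ∑ i ∈ e, f i ^ 2))
    with hφ
  have hdisj : Disjoint (E \ F) (F.image (fun e => insert x (e.erase u))) := by
    rw [Finset.disjoint_left]
    intro a ha hb
    obtain ⟨e, he, rfl⟩ := Finset.mem_image.mp hb
    exact hnew e he (Finset.mem_sdiff.mp ha).1
  have hinj : ∀ a ∈ F, ∀ b ∈ F, insert x (a.erase u) = insert x (b.erase u) → a = b := by
    intro a ha b hb h
    have hxa : x ∉ a.erase u := fun h' => hxF a ha (Finset.mem_of_mem_erase h')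
    have hxb : x ∉ b.erase u := fun h' => hxF b hb (Finset.mem_of_mem_erase h')
    have h2 : a.erase u = b.erase u := by
      have := congrArg (fun s => Finset.erase s x) h
      simpa [Finset.erase_insert hxa, Finset.erase_insert hxb] using this
    rw [← Finset.insert_erase (huF a ha), h2, Finset.insert_erase (huF b hb)]
  rw [lapForm_edge, lapForm_edge, Finset.sum_union hdisj, Finset.sum_image hinj,
    ← Finset.sum_sdiff hF (f := φ)]
  have key : ∀ e ∈ F, φ (insert x (e.erase u)) - φ e
      = (1 / ((k : ℝ) - 1)) * ∑ w ∈ e.erase u, (f x - f u) * (f x + f u - 2 * f w) := by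
    intro e he
    have he' : e ∈ E := hF he
    have hue : u ∈ e := huF e he
    have hxe : x ∉ e := hxF e he
    have hcard : e.card = k := hu e he'
    have hxS : x ∉ e.erase u := fun h' => hxe (Finset.mem_of_mem_erase h')
    have hScard : ((e.erase u).card : ℝ) = (k : ℝ) - 1 := by
      rw [Finset.card_erase_of_mem hue, hcard]
      have : 1 ≤ k := by omega
      push_cast [Nat.cast_sub this]
      ring
    have hshcard : ((insert x (e.erase u)).card : ℝ) = (k : ℝ) := by
      rw [Finset.card_insert_of_notMem hxS, Finset.card_erase_of_mem hue, hcard]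
      have : 1 ≤ k := by omega
      push_cast [Nat.cast_sub this]
      ring
    have hc : (k : ℝ) - 1 ≠ 0 := by
      have : (2 : ℝ) ≤ (k : ℝ) := by exact_mod_cast hk
      linarith
    have hrhs : ∑ w ∈ e.erase u, (f x - f u) * (f x + f u - 2 * f w)
        = ((k : ℝ) - 1) * ((f x - f u) * (f x + f u)) - 2 * (f x - f u) * ∑ w ∈ e.erase u, f w := by
      have keyw : ∀ w : V, (f x - f u) * (f x + f u - 2 * f w)
          = (f x - f u) * (f x + f u) - 2 * (f x - f u) * f w := fun w => by ring
      simp only [keyw, Finset.sum_sub_distrib, Finset.sum_const, nsmul_eq_mul, ← Finset.mul_sum,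
        hScard]
    rw [hrhs, hφ]
    simp only [hshcard, hcard, Finset.sum_insert hxS,
      ← Finset.add_sum_erase e f hue, ← Finset.add_sum_erase e (fun i => f i ^ 2) hue]
    set PS := ∑ w ∈ e.erase u, f w
    set QS := ∑ w ∈ e.erase u, f w ^ 2
    field_simp
    ring
  rw [Finset.mul_sum, ← Finset.sum_congr rfl key]
  simp only [hφ, Finset.sum_sub_distrib]
  ring
end

section
/- If f is the first Dirichlet eigenfunction of a k-uniform supertree G with boundary, rooted at a vertex v_0 maximizing f, then every interior vertex v has a child w (a neighbor at height h(v)+1) with f(w) < f(v). -/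
open Finset

variable {V : Type*} [Fintype V] [DecidableEq V]

section Aux
set_option linter.unusedSectionVars false

variable {E : Finset (Finset V)} {v0 : V}

lemma toGraph_adj' {u w : V} (h : u ≠ w) {e : Finset V} (he : e ∈ E) (hu : u ∈ e)
    (hw : w ∈ e) : (toGraph E).Adj u w := ⟨h, e, he, hu, hw⟩

lemma conn_of_hyper (h : HyperConnected E) (v0 : V) : (toGraph E).Connected := by
  haveI : Nonempty V := ⟨v0⟩
  refine SimpleGraph.Connected.mk ?_
  intro u v
  rw [SimpleGraph.reachable_iff_reflTransGen]
  exact h u v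

lemma height_self : height E v0 v0 = 0 := SimpleGraph.dist_self

lemma eq_v0_of_height_zero (hc : (toGraph E).Connected) {u : V} (h : height E v0 u = 0) :
    u = v0 := ((hc.dist_eq_zero_iff).mp h).symm

lemma height_le_of_adj (hc : (toGraph E).Connected) {u w : V} (h : (toGraph E).Adj u w) :
    height E v0 w ≤ height E v0 u + 1 := by
  have h1 : (toGraph E).dist v0 w ≤ (toGraph E).dist v0 u + (toGraph E).dist u w :=
    hc.dist_triangle
  have h2 : (toGraph E).dist u w = 1 := SimpleGraph.dist_eq_one_iff_adj.mpr h
  unfold height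
  omega

lemma edge_height (hc : (toGraph E).Connected) {e : Finset V} (he : e ∈ E) {x y : V}
    (hx : x ∈ e) (hy : y ∈ e) : height E v0 y ≤ height E v0 x + 1 := by
  by_cases hxy : x = y
  · subst hxy; omega
  · exact height_le_of_adj hc (toGraph_adj' hxy he hx hy)

lemma exists_parent (hc : (toGraph E).Connected) {u : V} {n : ℕ}
    (h : height E v0 u = n + 1) :
    ∃ w g, g ∈ E ∧ w ∈ g ∧ u ∈ g ∧ height E v0 w = n := by
  obtain ⟨p, hp⟩ := hc.exists_walk_length_eq_dist v0 u
  have hne : u ≠ v0 := by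
    intro h'
    rw [h', height_self] at h
    omega
  obtain ⟨x, hadj, q, hq⟩ := SimpleGraph.Walk.exists_eq_cons_of_ne hne p.reverse
  have hlen : q.length = n := by
    have h1 : p.reverse.length = p.length := SimpleGraph.Walk.length_reverse p
    have h2 : p.reverse.length = q.length + 1 := by rw [hq]; simp
    have h3 : p.length = n + 1 := by rw [hp]; exact h
    omega
  have hxle : height E v0 x ≤ n := by
    have := SimpleGraph.dist_le q.reverse
    have h4 : q.reverse.length = q.length := SimpleGraph.Walk.length_reverse q
    unfold height
    omega
  have hxge : n ≤ height E v0 x := by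
    have := height_le_of_adj (v0 := v0) hc hadj.symm
    omega
  obtain ⟨hne', g, hg, hug, hxg⟩ := hadj
  exact ⟨x, g, hg, hxg, hug, by omega⟩

lemma exists_chain (hc : (toGraph E).Connected) :
    ∀ (n : ℕ) (u : V), height E v0 u = n →
    ∃ (a : ℕ → V) (g : ℕ → Finset V), a n = u ∧ (∀ i ≤ n, height E v0 (a i) = i) ∧
      (∀ i < n, g i ∈ E ∧ a i ∈ g i ∧ a (i + 1) ∈ g i) := by
  intro n
  induction n with
  | zero =>
    intro u hu
    refine ⟨fun _ => u, fun _ => ∅, rfl, ?_, by omega⟩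
    intro i hi
    have : i = 0 := by omega
    subst this; exact hu
  | succ n ih =>
    intro u hu
    obtain ⟨w, g0, hg0, hwg, hug, hw⟩ := exists_parent hc hu
    obtain ⟨a, g, ha, hh, hg⟩ := ih w hw
    refine ⟨fun i => if i = n + 1 then u else a i, fun i => if i = n then g0 else g i,
      by simp, ?_, ?_⟩
    · intro i hi
      by_cases h' : i = n + 1
      · simp only [h', if_pos rfl]; exact hu
      · simp only [if_neg h']; exact hh i (by omega)
    · intro i hi
      by_cases h' : i = n
      · subst h'
        simp only [if_pos rfl, if_neg (by omega : ¬ i = i + 1)]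
        exact ⟨hg0, by rw [ha]; exact hwg, hug⟩
      · simp only [if_neg h', if_neg (by omega : ¬ i = n + 1), if_neg (by omega : ¬ i + 1 = n + 1)]
        exact hg i (by omega)

lemma fn_cycle (E : Finset (Finset V)) (p : ℕ) (hp : 2 ≤ p) (U : ℕ → V) (F : ℕ → Finset V)
    (hU : ∀ i j, i < j → j < p → U i ≠ U j) (hF : ∀ i j, i < j → j < p → F i ≠ F j)
    (hE : ∀ i < p, F i ∈ E) (hm1 : ∀ i < p, U i ∈ F i)
    (hm2 : ∀ i, i + 1 < p → U (i + 1) ∈ F i) (hw : U 0 ∈ F (p - 1)) : HasCycle E := by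
  refine ⟨p, hp, fun i => U i.val, fun i => F i.val, ?_, ?_, fun i => hE _ i.isLt,
    fun i => ⟨hm1 _ i.isLt, ?_⟩⟩
  · intro i j hij
    by_contra hne
    rcases lt_trichotomy i.val j.val with h | h | h
    · exact hU _ _ h j.isLt hij
    · exact hne (Fin.ext h)
    · exact hU _ _ h i.isLt hij.symm
  · intro i j hij
    by_contra hne
    rcases lt_trichotomy i.val j.val with h | h | h
    · exact hF _ _ h j.isLt hij
    · exact hne (Fin.ext h)
    · exact hF _ _ h i.isLt hij.symm
  · have key : U ((i.val + 1) % p) ∈ F i.val := by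
      by_cases h : i.val + 1 < p
      · rw [Nat.mod_eq_of_lt h]
        exact hm2 _ h
      · have h1 : i.val = p - 1 := by have := i.isLt; omega
        have h2 : i.val + 1 = p := by omega
        rw [h2, Nat.mod_self, h1]
        exact hw
    show U ((i + (⟨1, by omega⟩ : Fin p)).val) ∈ F i.val
    rw [Fin.add_def]
    exact key

lemma two_edge_cycle {x y : V} {e1 e2 : Finset V} (hxy : x ≠ y) (he : e1 ≠ e2)
    (h1 : e1 ∈ E) (h2 : e2 ∈ E) (hx1 : x ∈ e1) (hy1 : y ∈ e1) (hx2 : x ∈ e2) (hy2 : y ∈ e2) :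
    HasCycle E := by
  apply fn_cycle E 2 le_rfl (fun i => if i = 0 then x else y) (fun i => if i = 0 then e1 else e2)
  · intro i j hij hj
    have : i = 0 ∧ j = 1 := by omega
    simp [this.1, this.2, hxy]
  · intro i j hij hj
    have : i = 0 ∧ j = 1 := by omega
    simp [this.1, this.2, he]
  · intro i hi
    by_cases h : i = 0 <;> simp [h, h1, h2]
  · intro i hi
    interval_cases i <;> simp [hx1, hy2]
  · intro i hi
    have : i = 0 := by omega
    simp [this, hy1]
  · simp [hx2]

end Aux
section Alg
set_option linter.unusedSectionVars false

variable {E : Finset (Finset V)} {k : ℕ}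

lemma adjMat_nonneg (hk : 2 ≤ k) (hcard : ∀ e ∈ E, e.card = k) (i j : V) :
    0 ≤ adjMat E i j := by
  unfold adjMat
  split
  · apply Finset.sum_nonneg
    intro e he
    rw [Finset.mem_filter] at he
    have hc := hcard e he.1
    have h2 : (2 : ℝ) ≤ (e.card : ℝ) := by rw [hc]; exact_mod_cast hk
    apply div_nonneg zero_le_one
    linarith
  · exact le_rfl

lemma adjMat_symm (i j : V) : adjMat E i j = adjMat E j i := by
  unfold adjMat
  by_cases h : i = j
  · subst h; rfl
  · rw [if_pos h, if_pos (Ne.symm h)]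
    apply Finset.sum_congr _ (fun _ _ => rfl)
    congr 1
    funext e
    exact propext and_comm

lemma adjMat_pos (hk : 2 ≤ k) (hcard : ∀ e ∈ E, e.card = k) {i j : V} (hij : i ≠ j)
    {e : Finset V} (he : e ∈ E) (hi : i ∈ e) (hj : j ∈ e) : 0 < adjMat E i j := by
  unfold adjMat
  rw [if_pos hij]
  apply Finset.sum_pos'
  · intro x hx
    rw [Finset.mem_filter] at hx
    have hc := hcard x hx.1
    have h2 : (2 : ℝ) ≤ (x.card : ℝ) := by rw [hc]; exact_mod_cast hk
    apply div_nonneg zero_le_one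
    linarith
  · refine ⟨e, Finset.mem_filter.mpr ⟨he, hi, hj⟩, ?_⟩
    have hc := hcard e he
    have h2 : (2 : ℝ) ≤ (e.card : ℝ) := by rw [hc]; exact_mod_cast hk
    apply div_pos zero_lt_one
    linarith

lemma adjMat_eq_zero {i j : V} (h : ¬ (toGraph E).Adj i j) : adjMat E i j = 0 := by
  unfold adjMat
  split
  · rename_i hij
    apply Finset.sum_eq_zero
    intro e he
    rw [Finset.mem_filter] at he
    exact absurd ⟨hij, e, he.1, he.2.1, he.2.2⟩ h
  · rfl

lemma rowsum (hk : 2 ≤ k) (hcard : ∀ e ∈ E, e.card = k) (i : V) :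
    ∑ j, adjMat E i j = (deg E i : ℝ) := by
  have step : ∀ j, adjMat E i j =
      ∑ e ∈ E, if i ∈ e ∧ j ∈ e ∧ j ≠ i then 1 / ((e.card : ℝ) - 1) else 0 := by
    intro j
    unfold adjMat
    by_cases h : i = j
    · subst h
      simp
    · rw [if_pos h, Finset.sum_filter]
      apply Finset.sum_congr rfl
      intro e _
      have : (i ∈ e ∧ j ∈ e) ↔ (i ∈ e ∧ j ∈ e ∧ j ≠ i) :=
        ⟨fun ⟨a, b⟩ => ⟨a, b, Ne.symm h⟩, fun ⟨a, b, _⟩ => ⟨a, b⟩⟩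
      exact if_congr this rfl rfl
  rw [Finset.sum_congr rfl (fun j _ => step j), Finset.sum_comm]
  have inner : ∀ e ∈ E, (∑ j, if i ∈ e ∧ j ∈ e ∧ j ≠ i then 1 / ((e.card : ℝ) - 1) else 0)
      = if i ∈ e then 1 else 0 := by
    intro e he
    by_cases hie : i ∈ e
    · rw [if_pos hie]
      have hcond : ∀ j, (i ∈ e ∧ j ∈ e ∧ j ≠ i) ↔ j ∈ e.erase i := by
        intro j
        rw [Finset.mem_erase]
        exact ⟨fun ⟨_, b, c⟩ => ⟨c, b⟩, fun ⟨c, b⟩ => ⟨hie, b, c⟩⟩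
      rw [Finset.sum_congr rfl (fun j _ => if_congr (hcond j) rfl rfl), ← Finset.sum_filter,
        Finset.filter_univ_mem]
      rw [Finset.sum_const, Finset.card_erase_of_mem hie, hcard e he]
      have h2 : (2 : ℝ) ≤ (k : ℝ) := by exact_mod_cast hk
      have : ((k - 1 : ℕ) : ℝ) = (k : ℝ) - 1 := by
        rw [Nat.cast_sub (by omega)]; norm_num
      rw [nsmul_eq_mul, this]
      rw [mul_one_div, div_self (by linarith : (k : ℝ) - 1 ≠ 0)]
    · rw [if_neg hie]
      apply Finset.sum_eq_zero
      intro j _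
      rw [if_neg (by tauto)]
  rw [Finset.sum_congr rfl inner, Finset.sum_boole]
  simp [deg]

lemma lap_eq (hk : 2 ≤ k) (hcard : ∀ e ∈ E, e.card = k) (f : V → ℝ) (i : V) :
    lap E f i = ∑ j, adjMat E i j * (f i - f j) := by
  unfold lap
  simp_rw [mul_sub]
  rw [Finset.sum_sub_distrib, ← Finset.sum_mul, rowsum hk hcard]

lemma lapForm_double (hk : 2 ≤ k) (hcard : ∀ e ∈ E, e.card = k) (f : V → ℝ) :
    2 * lapForm E f = ∑ i, ∑ j, adjMat E i j * (f i - f j) ^ 2 := by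
  have expand : ∀ i j : V, adjMat E i j * (f i - f j) ^ 2 =
      (adjMat E i j * (f i - f j)) * f i - (adjMat E i j * (f i - f j)) * f j := by
    intro i j; ring
  symm
  calc ∑ i, ∑ j, adjMat E i j * (f i - f j) ^ 2
      = (∑ i, ∑ j, (adjMat E i j * (f i - f j)) * f i)
        - ∑ i, ∑ j, (adjMat E i j * (f i - f j)) * f j := by
        rw [← Finset.sum_sub_distrib]
        apply Finset.sum_congr rfl
        intro i _
        rw [← Finset.sum_sub_distrib]
        exact Finset.sum_congr rfl (fun j _ => expand i j)
    _ = lapForm E f - (- lapForm E f) := by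
        congr 1
        · unfold lapForm
          apply Finset.sum_congr rfl
          intro i _
          rw [lap_eq hk hcard, Finset.sum_mul]
        · unfold lapForm
          rw [Finset.sum_comm, ← Finset.sum_neg_distrib]
          apply Finset.sum_congr rfl
          intro j _
          rw [lap_eq hk hcard, Finset.sum_mul, ← Finset.sum_neg_distrib]
          apply Finset.sum_congr rfl
          intro i _
          rw [adjMat_symm]
          ring
    _ = 2 * lapForm E f := by ring

lemma firstEig_eq (f : V → ℝ) (hf : IsFirstEigfun E f) : lapForm E f = firstEig E := by
  unfold lapForm
  have key : ∀ i : V, lap E f i * f i = firstEig E * (f i) ^ 2 := by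
    intro i
    by_cases h : deg E i = 1
    · simp [hf.2.1 i h]
    · rw [hf.2.2.2 i h]; ring
  rw [Finset.sum_congr rfl (fun i _ => key i), ← Finset.mul_sum, hf.1, mul_one]

lemma exists_diff_pair {f : V → ℝ} (hcon : HyperConnected E) {x y : V} (hfxy : f x ≠ f y) :
    ∃ u w, HAdj E u w ∧ f u ≠ f w := by
  have h := hcon x y
  induction h with
  | refl => exact absurd rfl hfxy
  | @tail b c h1 h2 ih =>
    by_cases hb : f x = f b
    · exact ⟨b, c, h2, by rw [← hb]; exact hfxy⟩
    · exact ih hb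

lemma firstEig_pos (hk : 2 ≤ k) (hG : IsSupertree k E) (hb : ∃ v, deg E v = 1)
    {f : V → ℝ} (hf : IsFirstEigfun E f) : 0 < firstEig E := by
  rw [← firstEig_eq f hf]
  obtain ⟨b, hb1⟩ := hb
  have hfb : f b = 0 := hf.2.1 b hb1
  have hex : ∃ w, f w ≠ 0 := by
    by_contra h
    push_neg at h
    have := hf.1
    rw [Finset.sum_eq_zero (fun v _ => by rw [h v]; ring)] at this
    norm_num at this
  obtain ⟨w, hw⟩ := hex
  obtain ⟨x, y, hxy, hfxy⟩ := exists_diff_pair hG.2.1 (show f w ≠ f b by rw [hfb]; exact hw)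
  obtain ⟨hne, e, he, hx, hy⟩ := hxy
  have hcard := hG.1
  have hpos : 0 < adjMat E x y * (f x - f y) ^ 2 := by
    apply mul_pos (adjMat_pos hk hcard hne he hx hy)
    have : f x - f y ≠ 0 := sub_ne_zero.2 hfxy
    positivity
  have hrow : ∀ i : V, 0 ≤ ∑ j, adjMat E i j * (f i - f j) ^ 2 := by
    intro i
    apply Finset.sum_nonneg
    intro j _
    apply mul_nonneg (adjMat_nonneg hk hcard i j) (sq_nonneg _)
  have h2 : 0 < 2 * lapForm E f := by
    rw [lapForm_double hk hcard]
    calc (0:ℝ) < adjMat E x y * (f x - f y) ^ 2 := hpos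
      _ ≤ ∑ j, adjMat E x j * (f x - f j) ^ 2 := by
          apply Finset.single_le_sum (f := fun j => adjMat E x j * (f x - f j) ^ 2)
            (fun j _ => mul_nonneg (adjMat_nonneg hk hcard x j) (sq_nonneg _)) (Finset.mem_univ y)
      _ ≤ ∑ i, ∑ j, adjMat E i j * (f i - f j) ^ 2 := by
          apply Finset.single_le_sum (f := fun i => ∑ j, adjMat E i j * (f i - f j) ^ 2)
            (fun i _ => hrow i) (Finset.mem_univ x)
  linarith

end Alg
section Struct
set_option linter.unusedSectionVars false
set_option maxHeartbeats 1000000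

variable {E : Finset (Finset V)} {v0 : V}

lemma twoChains (hc : (toGraph E).Connected) (hNC : ¬ HasCycle E)
    (n : ℕ) (hn : 1 ≤ n) (a b : ℕ → V) (g g' : ℕ → Finset V)
    (hha : ∀ i ≤ n, height E v0 (a i) = i) (hhb : ∀ i ≤ n, height E v0 (b i) = i)
    (hga : ∀ i < n, g i ∈ E ∧ a i ∈ g i ∧ a (i + 1) ∈ g i)
    (hgb : ∀ i < n, g' i ∈ E ∧ b i ∈ g' i ∧ b (i + 1) ∈ g' i)
    (htopV : a n ≠ b n → ∃ et, et ∈ E ∧ a n ∈ et ∧ b n ∈ et ∧ ∀ z ∈ et, n ≤ height E v0 z)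
    (htopE : a n = b n → g (n - 1) ≠ g' (n - 1)) : False := by
  classical
  apply hNC
  have hgaux : ∀ t, t < n → ∀ x ∈ g t, t ≤ height E v0 x ∧ height E v0 x ≤ t + 1 := by
    intro t ht x hx
    obtain ⟨hE', h1, h2⟩ := hga t ht
    constructor
    · have := edge_height (v0 := v0) hc hE' hx h2
      rw [hha (t + 1) (by omega)] at this; omega
    · have := edge_height (v0 := v0) hc hE' h1 hx
      rw [hha t (by omega)] at this; omega
  have hgaux' : ∀ t, t < n → ∀ x ∈ g' t, t ≤ height E v0 x ∧ height E v0 x ≤ t + 1 := by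
    intro t ht x hx
    obtain ⟨hE', h1, h2⟩ := hgb t ht
    constructor
    · have := edge_height (v0 := v0) hc hE' hx h2
      rw [hhb (t + 1) (by omega)] at this; omega
    · have := edge_height (v0 := v0) hc hE' h1 hx
      rw [hhb t (by omega)] at this; omega
  have hgg : ∀ i j, i < j → j < n → g i ≠ g j := by
    intro i j hij hj heq
    have h2 := (hgaux i (by omega) (a (j + 1)) (by rw [heq]; exact (hga j hj).2.2)).2
    rw [hha (j + 1) (by omega)] at h2; omega
  have hgg' : ∀ i j, i < j → j < n → g' i ≠ g' j := by
    intro i j hij hj heq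
    have h2 := (hgaux' i (by omega) (b (j + 1)) (by rw [heq]; exact (hgb j hj).2.2)).2
    rw [hhb (j + 1) (by omega)] at h2; omega
  have hgcross : ∀ i j, i < n → j < n → i ≠ j → g i ≠ g' j := by
    intro i j hi hj hij heq
    rcases lt_or_gt_of_ne hij with h | h
    · have h2 := (hgaux i hi (b (j + 1)) (by rw [heq]; exact (hgb j hj).2.2)).2
      rw [hhb (j + 1) (by omega)] at h2; omega
    · have h2 := (hgaux' j hj (a (i + 1)) (by rw [← heq]; exact (hga i hi).2.2)).2
      rw [hha (i + 1) (by omega)] at h2; omega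
  have h00 : a 0 = b 0 := by
    rw [eq_v0_of_height_zero hc (hha 0 (by omega)), eq_v0_of_height_zero hc (hhb 0 (by omega))]
  set S : Finset ℕ := (Finset.range n).filter (fun t => a t = b t ∨ g t = g' t) with hSdef
  have h0S : 0 ∈ S := by
    rw [hSdef]
    exact Finset.mem_filter.mpr ⟨Finset.mem_range.mpr (by omega), Or.inl h00⟩
  have hSne : S.Nonempty := ⟨0, h0S⟩
  set m := S.max' hSne with hmdef
  have hmS : m ∈ S := S.max'_mem hSne
  have hmlt : m < n := Finset.mem_range.mp (Finset.mem_filter.mp hmS).1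
  have hmor : a m = b m ∨ g m = g' m := (Finset.mem_filter.mp hmS).2
  have hmaxV : ∀ i, m < i → i < n → a i ≠ b i := by
    intro i h1 h2 heq
    exact absurd (S.le_max' i (Finset.mem_filter.mpr
      ⟨Finset.mem_range.mpr h2, Or.inl heq⟩)) (by omega)
  have hmaxE : ∀ i, m < i → i < n → g i ≠ g' i := by
    intro i h1 h2 heq
    exact absurd (S.le_max' i (Finset.mem_filter.mpr
      ⟨Finset.mem_range.mpr h2, Or.inr heq⟩)) (by omega)
  obtain ⟨et, hET⟩ : ∃ et, a n ≠ b n →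
      et ∈ E ∧ a n ∈ et ∧ b n ∈ et ∧ ∀ z ∈ et, n ≤ height E v0 z := by
    by_cases h : a n = b n
    · exact ⟨∅, fun hh => absurd h hh⟩
    · obtain ⟨et, h1, h2, h3, h4⟩ := htopV h
      exact ⟨et, fun _ => ⟨h1, h2, h3, h4⟩⟩
  set s : ℕ := if g m = g' m then m + 1 else m with hsdef
  have hsplit : (s = m + 1 ∧ g m = g' m) ∨ (s = m ∧ ¬(g m = g' m) ∧ a m = b m) := by
    by_cases h : g m = g' m
    · left; exact ⟨by rw [hsdef, if_pos h], h⟩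
    · right; exact ⟨by rw [hsdef, if_neg h], h, hmor.resolve_right h⟩
  have hsm : m ≤ s ∧ s ≤ m + 1 := by rcases hsplit with ⟨h1, _⟩ | ⟨h1, _⟩ <;> omega
  have hsn : s ≤ n := by omega
  set τ : ℕ := if a n = b n then 1 else 2 with hτdef
  have hτsplit : (τ = 1 ∧ a n = b n) ∨ (τ = 2 ∧ a n ≠ b n) := by
    by_cases h : a n = b n
    · left; exact ⟨by rw [hτdef, if_pos h], h⟩
    · right; exact ⟨by rw [hτdef, if_neg h], h⟩
  have hτ12 : 1 ≤ τ ∧ τ ≤ 2 := by rcases hτsplit with ⟨h1, _⟩ | ⟨h1, _⟩ <;> omega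
  -- if the a-chain reaches index n-1, top edges differ
  have hgtopne : s ≤ n - 1 → g (n - 1) ≠ g' (n - 1) := by
    intro hsle
    by_cases hm1 : m < n - 1
    · exact hmaxE (n - 1) hm1 (by omega)
    · have hmeq : m = n - 1 := by omega
      rcases hsplit with ⟨h1, _⟩ | ⟨_, h2, _⟩
      · omega
      · rw [← hmeq]; exact h2
  set p : ℕ := (n - s) + τ + (n - 1 - m) with hpdef
  have hp2 : 2 ≤ p := by
    rcases hsplit with ⟨h1, hA⟩ | ⟨h1, _⟩
    · by_cases hmn : m + 1 < n
      · omega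
      · -- m = n - 1, case A: then a n ≠ b n, τ = 2
        have hmeq : m = n - 1 := by omega
        rcases hτsplit with ⟨ht1, hab⟩ | ⟨ht2, _⟩
        · exact absurd (hmeq ▸ hA) (htopE hab)
        · omega
    · omega
  set U : ℕ → V := fun i => if i < n - s then a (s + i)
    else if i < n - s + τ then (if i = n - s then a n else b n)
    else b (n - 1 - (i - (n - s) - τ)) with hUdef
  set F : ℕ → Finset V := fun i => if i < n - s then g (s + i)
    else if i = n - s then (if a n = b n then g' (n - 1) else et)
    else if i < n - s + τ then g' (n - 1)
    else g' (n - 2 - (i - (n - s) - τ)) with hFdef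
  have hU1 : ∀ i, i < n - s → U i = a (s + i) := by
    intro i h; rw [hUdef]; simp only; rw [if_pos h]
  have hU2a : U (n - s) = a n := by
    rw [hUdef]; simp only
    rw [if_neg (by omega), if_pos (by omega)]
    simp
  have hU2b : τ = 2 → U (n - s + 1) = b n := by
    intro h; rw [hUdef]; simp only
    rw [if_neg (by omega), if_pos (by omega), if_neg (by omega)]
  have hU3 : ∀ d, U (n - s + τ + d) = b (n - 1 - d) := by
    intro d; rw [hUdef]; simp only
    rw [if_neg (by omega), if_neg (by omega)]
    congr 1
    omega
  have hF1 : ∀ i, i < n - s → F i = g (s + i) := by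
    intro i h; rw [hFdef]; simp only; rw [if_pos h]
  have hF2V : a n = b n → F (n - s) = g' (n - 1) := by
    intro h; rw [hFdef]; simp only
    rw [if_neg (by omega)]
    simp [h]
  have hF2E : a n ≠ b n → F (n - s) = et := by
    intro h; rw [hFdef]; simp only
    rw [if_neg (by omega)]
    simp [h]
  have hF2b : τ = 2 → F (n - s + 1) = g' (n - 1) := by
    intro h; rw [hFdef]; simp only
    rw [if_neg (by omega), if_neg (by omega), if_pos (by omega)]
  have hF3 : ∀ d, F (n - s + τ + d) = g' (n - 2 - d) := by
    intro d; rw [hFdef]; simp only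
    rw [if_neg (by omega), if_neg (by omega), if_neg (by omega)]
    congr 1
    omega
  apply fn_cycle E p hp2 U F
  · -- U injective
    intro i j hij hjp heq
    by_cases hi1 : i < n - s
    · rw [hU1 i hi1] at heq
      by_cases hj1 : j < n - s
      · rw [hU1 j hj1] at heq
        have := congrArg (height E v0) heq
        rw [hha (s + i) (by omega), hha (s + j) (by omega)] at this
        omega
      · by_cases hj2 : j < n - s + τ
        · -- U j has height n, U i has height s + i < n
          have hhj : height E v0 (U j) = n := by
            by_cases h3 : j = n - s
            · rw [h3, hU2a]; exact hha n le_rfl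
            · have hτ2 : τ = 2 := by omega
              have hj' : j = n - s + 1 := by omega
              rw [hj', hU2b hτ2]; exact hhb n le_rfl
          rw [← heq] at hhj
          rw [hha (s + i) (by omega)] at hhj
          omega
        · have hd : j = n - s + τ + (j - (n - s) - τ) := by omega
          rw [hd, hU3] at heq
          set d := j - (n - s) - τ with hddef
          have hdlt : d < n - 1 - m := by rw [hpdef] at hjp; omega
          have := congrArg (height E v0) heq
          rw [hha (s + i) (by omega), hhb (n - 1 - d) (by omega)] at this
          -- s + i = n - 1 - d > m, so a and b differ there
          have ht : m < n - 1 - d := by omega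
          exact hmaxV (n - 1 - d) ht (by omega) (by rw [← this] at heq ⊢; rw [← heq]
            <;> skip) |>.elim
    · by_cases hi2 : i < n - s + τ
      · by_cases hj2 : j < n - s + τ
        · -- both in top region: i = n-s, j = n-s+1, τ = 2
          have hτ2 : τ = 2 := by omega
          have hi' : i = n - s := by omega
          have hj' : j = n - s + 1 := by omega
          rw [hi', hU2a, hj', hU2b hτ2] at heq
          rcases hτsplit with ⟨h1, _⟩ | ⟨_, hab⟩
          · omega
          · exact hab heq
        · -- i in top (height n), j in b-segment (height < n)
          have hhi : height E v0 (U i) = n := by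
            by_cases h3 : i = n - s
            · rw [h3, hU2a]; exact hha n le_rfl
            · have hτ2 : τ = 2 := by omega
              have hi' : i = n - s + 1 := by omega
              rw [hi', hU2b hτ2]; exact hhb n le_rfl
          have hd : j = n - s + τ + (j - (n - s) - τ) := by omega
          rw [hd, hU3] at heq
          have hdlt : j - (n - s) - τ < n - 1 - m := by rw [hpdef] at hjp; omega
          rw [heq, hhb (n - 1 - (j - (n - s) - τ)) (by omega)] at hhi
          omega
      · -- both in b-segment
        have hdi : i = n - s + τ + (i - (n - s) - τ) := by omega
        have hdj : j = n - s + τ + (j - (n - s) - τ) := by omega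
        rw [hdi, hU3, hdj, hU3] at heq
        have hdlti : i - (n - s) - τ < n - 1 - m := by rw [hpdef] at hjp; omega
        have hdltj : j - (n - s) - τ < n - 1 - m := by rw [hpdef] at hjp; omega
        have := congrArg (height E v0) heq
        rw [hhb (n - 1 - (i - (n - s) - τ)) (by omega),
          hhb (n - 1 - (j - (n - s) - τ)) (by omega)] at this
        omega
  · -- F injective
    intro i j hij hjp heq
    by_cases hi1 : i < n - s
    · rw [hF1 i hi1] at heq
      have hsin : s + i < n := by omega
      by_cases hj1 : j < n - s
      · rw [hF1 j hj1] at heq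
        exact hgg (s + i) (s + j) (by omega) (by omega) heq
      · by_cases hj2 : j = n - s
        · rcases hτsplit with ⟨_, hab⟩ | ⟨_, hab⟩
          · rw [hj2, hF2V hab] at heq
            by_cases hlt : s + i < n - 1
            · exact hgcross (s + i) (n - 1) (by omega) (by omega) (by omega) heq
            · have : s + i = n - 1 := by omega
              rw [this] at heq
              exact hgtopne (by omega) heq
          · rw [hj2, hF2E hab] at heq
            have hmem : a (s + i) ∈ et := by rw [← heq]; exact (hga (s + i) hsin).2.1
            have := (hET hab).2.2.2 _ hmem
            rw [hha (s + i) (by omega)] at this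
            omega
        · by_cases hj3 : j < n - s + τ
          · have hτ2 : τ = 2 := by omega
            have hj' : j = n - s + 1 := by omega
            rw [hj', hF2b hτ2] at heq
            by_cases hlt : s + i < n - 1
            · exact hgcross (s + i) (n - 1) (by omega) (by omega) (by omega) heq
            · have : s + i = n - 1 := by omega
              rw [this] at heq
              exact hgtopne (by omega) heq
          · have hdj : j = n - s + τ + (j - (n - s) - τ) := by omega
            rw [hdj, hF3] at heq
            set d := j - (n - s) - τ with hddef
            have hdlt : d < n - 1 - m := by rw [hpdef] at hjp; omega
            by_cases hne : s + i = n - 2 - d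
            · -- equal indices: s + i = n - 2 - d ≥ m
              have hgeq : g (s + i) = g' (s + i) := by rw [heq, hne]
              by_cases hgt : m < s + i
              · exact hmaxE (s + i) hgt (by omega) hgeq
              · have : s + i = m := by omega
                rcases hsplit with ⟨h1, _⟩ | ⟨h1, h2, _⟩
                · omega
                · rw [this] at hgeq; exact h2 hgeq
            · exact hgcross (s + i) (n - 2 - d) (by omega) (by omega) hne heq
    · by_cases hi2 : i = n - s
      · by_cases hj3 : j < n - s + τ
        · -- i = n-s, j = n-s+1, τ=2: et vs g' (n-1)
          have hτ2 : τ = 2 := by omega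
          have hab : a n ≠ b n := by
            rcases hτsplit with ⟨h1, _⟩ | ⟨_, hab⟩
            · omega
            · exact hab
          have hj' : j = n - s + 1 := by omega
          rw [hi2, hF2E hab, hj', hF2b hτ2] at heq
          have hmem : b (n - 1) ∈ et := by rw [heq]; exact (hgb (n - 1) (by omega)).2.1
          have := (hET hab).2.2.2 _ hmem
          rw [hhb (n - 1) (by omega)] at this
          omega
        · -- i = n-s (top), j in b-segment
          have hdj : j = n - s + τ + (j - (n - s) - τ) := by omega
          rw [hdj, hF3] at heq
          set d := j - (n - s) - τ with hddef
          have hdlt : d < n - 1 - m := by rw [hpdef] at hjp; omega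
          rcases hτsplit with ⟨_, hab⟩ | ⟨_, hab⟩
          · rw [hi2, hF2V hab] at heq
            exact hgg' (n - 2 - d) (n - 1) (by omega) (by omega) heq.symm
          · rw [hi2, hF2E hab] at heq
            have hmem : b (n - 2 - d) ∈ et := by
              rw [heq]; exact (hgb (n - 2 - d) (by omega)).2.1
            have := (hET hab).2.2.2 _ hmem
            rw [hhb (n - 2 - d) (by omega)] at this
            omega
      · by_cases hi3 : i < n - s + τ
        · -- i = n-s+1 (τ=2): g' (n-1) vs b-segment g' (n-2-d)
          have hτ2 : τ = 2 := by omega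
          have hi' : i = n - s + 1 := by omega
          have hdj : j = n - s + τ + (j - (n - s) - τ) := by omega
          rw [hi', hF2b hτ2, hdj, hF3] at heq
          have hdlt : j - (n - s) - τ < n - 1 - m := by rw [hpdef] at hjp; omega
          exact hgg' (n - 2 - (j - (n - s) - τ)) (n - 1) (by omega) (by omega) heq.symm
        · -- both in b-segment
          have hdi : i = n - s + τ + (i - (n - s) - τ) := by omega
          have hdj : j = n - s + τ + (j - (n - s) - τ) := by omega
          rw [hdi, hF3, hdj, hF3] at heq
          have hdlti : i - (n - s) - τ < n - 1 - m := by rw [hpdef] at hjp; omega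
          have hdltj : j - (n - s) - τ < n - 1 - m := by rw [hpdef] at hjp; omega
          exact hgg' (n - 2 - (j - (n - s) - τ)) (n - 2 - (i - (n - s) - τ))
            (by omega) (by omega) heq.symm
  · -- F i ∈ E
    intro i hip
    by_cases hi1 : i < n - s
    · rw [hF1 i hi1]; exact (hga (s + i) (by omega)).1
    · by_cases hi2 : i = n - s
      · rcases hτsplit with ⟨_, hab⟩ | ⟨_, hab⟩
        · rw [hi2, hF2V hab]; exact (hgb (n - 1) (by omega)).1
        · rw [hi2, hF2E hab]; exact (hET hab).1
      · by_cases hi3 : i < n - s + τ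
        · have hτ2 : τ = 2 := by omega
          rw [show i = n - s + 1 by omega, hF2b hτ2]
          exact (hgb (n - 1) (by omega)).1
        · rw [show i = n - s + τ + (i - (n - s) - τ) by omega, hF3]
          have : i - (n - s) - τ < n - 1 - m := by rw [hpdef] at hip; omega
          exact (hgb (n - 2 - (i - (n - s) - τ)) (by omega)).1
  · -- U i ∈ F i
    intro i hip
    by_cases hi1 : i < n - s
    · rw [hF1 i hi1, hU1 i hi1]; exact (hga (s + i) (by omega)).2.1
    · by_cases hi2 : i = n - s
      · rcases hτsplit with ⟨_, hab⟩ | ⟨_, hab⟩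
        · rw [hi2, hF2V hab, hU2a, hab]
          have := (hgb (n - 1) (by omega)).2.2
          rwa [show n - 1 + 1 = n by omega] at this
        · rw [hi2, hF2E hab, hU2a]; exact (hET hab).2.1
      · by_cases hi3 : i < n - s + τ
        · have hτ2 : τ = 2 := by omega
          rw [show i = n - s + 1 by omega, hF2b hτ2, hU2b hτ2]
          have := (hgb (n - 1) (by omega)).2.2
          rwa [show n - 1 + 1 = n by omega] at this
        · rw [show i = n - s + τ + (i - (n - s) - τ) by omega, hF3, hU3]
          have hd : i - (n - s) - τ < n - 1 - m := by rw [hpdef] at hip; omega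
          have := (hgb (n - 2 - (i - (n - s) - τ)) (by omega)).2.2
          rwa [show n - 2 - (i - (n - s) - τ) + 1 = n - 1 - (i - (n - s) - τ) by omega] at this
  · -- U (i+1) ∈ F i
    intro i hip
    by_cases hi1 : i < n - s
    · rw [hF1 i hi1]
      by_cases hi1' : i + 1 < n - s
      · rw [hU1 (i + 1) hi1', show s + (i + 1) = s + i + 1 by omega]
        exact (hga (s + i) (by omega)).2.2
      · have : i + 1 = n - s := by omega
        rw [this, hU2a]
        have hsi : s + i = n - 1 := by omega
        rw [hsi]
        have := (hga (n - 1) (by omega)).2.2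
        rwa [show n - 1 + 1 = n by omega] at this
    · by_cases hi2 : i = n - s
      · rcases hτsplit with ⟨hτ1, hab⟩ | ⟨hτ2, hab⟩
        · rw [hi2, hF2V hab, show n - s + 1 = n - s + τ + 0 by omega, hU3]
          exact (hgb (n - 1) (by omega)).2.1
        · rw [hi2, hF2E hab, show n - s + 1 = n - s + 1 from rfl, hU2b hτ2]
          exact (hET hab).2.2.1
      · by_cases hi3 : i < n - s + τ
        · have hτ2 : τ = 2 := by omega
          rw [show i = n - s + 1 by omega, hF2b hτ2,
            show n - s + 1 + 1 = n - s + τ + 0 by omega, hU3]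
          exact (hgb (n - 1) (by omega)).2.1
        · have hd : i - (n - s) - τ < n - 1 - m := by rw [hpdef] at hip; omega
          rw [show i = n - s + τ + (i - (n - s) - τ) by omega, hF3,
            show n - s + τ + (i - (n - s) - τ) + 1 = n - s + τ + (i - (n - s) - τ + 1) by omega,
            hU3]
          rw [show n - 1 - (i - (n - s) - τ + 1) = n - 2 - (i - (n - s) - τ) by omega]
          exact (hgb (n - 2 - (i - (n - s) - τ)) (by omega)).2.1
  · -- wrap: U 0 ∈ F (p - 1)
    have hU0 : U 0 = a s := by
      by_cases h : 0 < n - s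
      · rw [hU1 0 h, Nat.add_zero]
      · have hseq : s = n := by omega
        have : (0 : ℕ) = n - s := by omega
        rw [this, hU2a, hseq]
    have hFlast : F (p - 1) = g' m := by
      by_cases hm1 : m < n - 1
      · rw [show p - 1 = n - s + τ + (n - 2 - m) by rw [hpdef]; omega, hF3,
          show n - 2 - (n - 2 - m) = m by omega]
      · have hmeq : m = n - 1 := by omega
        rcases hτsplit with ⟨hτ1, hab⟩ | ⟨hτ2, hab⟩
        · rw [show p - 1 = n - s by rw [hpdef]; omega, hF2V hab, hmeq]
        · rw [show p - 1 = n - s + 1 by rw [hpdef]; omega, hF2b hτ2, hmeq]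
    rw [hU0, hFlast]
    rcases hsplit with ⟨h1, hA⟩ | ⟨h1, _, h2⟩
    · rw [h1, ← hA]
      exact (hga m hmlt).2.2
    · rw [h1, h2]
      exact (hgb m hmlt).2.1

end Struct
section Final
set_option linter.unusedSectionVars false

variable {E : Finset (Finset V)} {v0 : V}

lemma no_horizontal (hc : (toGraph E).Connected) (hNC : ¬ HasCycle E) {n : ℕ} (hn : 1 ≤ n)
    {x y : V} {e : Finset V} (he : e ∈ E) (hx : x ∈ e) (hy : y ∈ e) (hxy : x ≠ y)
    (hhx : height E v0 x = n) (hhy : height E v0 y = n)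
    (hmin : ∀ z ∈ e, n ≤ height E v0 z) : False := by
  obtain ⟨a, g, ha, hha, hga⟩ := exists_chain hc n x hhx
  obtain ⟨b, g', hb, hhb, hgb⟩ := exists_chain hc n y hhy
  exact twoChains hc hNC n hn a b g g' hha hhb hga hgb
    (fun _ => ⟨e, he, by rw [ha]; exact hx, by rw [hb]; exact hy, hmin⟩)
    (fun h => absurd h (by rw [ha, hb]; exact hxy))

lemma unique_parent (hc : (toGraph E).Connected) (hNC : ¬ HasCycle E) {n : ℕ}
    {v u1 u2 : V} {e1 e2 : Finset V}
    (he1 : e1 ∈ E) (he2 : e2 ∈ E) (hne : e1 ≠ e2)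
    (hv1 : v ∈ e1) (hv2 : v ∈ e2) (hu1 : u1 ∈ e1) (hu2 : u2 ∈ e2)
    (hhv : height E v0 v = n + 1) (hh1 : height E v0 u1 = n) (hh2 : height E v0 u2 = n) :
    False := by
  by_cases h12 : u1 = u2
  · subst h12
    have hvu : u1 ≠ v := by intro h; rw [h, hhv] at hh1; omega
    exact hNC (two_edge_cycle hvu hne he1 he2 hu1 hv1 hu2 hv2)
  · obtain ⟨α, γ, hα, hhα, hγ⟩ := exists_chain hc n u1 hh1
    obtain ⟨β, γ', hβ, hhβ, hγ'⟩ := exists_chain hc n u2 hh2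
    set a : ℕ → V := fun i => if i = n + 1 then v else α i with hadef
    set b : ℕ → V := fun i => if i = n + 1 then v else β i with hbdef
    set g : ℕ → Finset V := fun i => if i = n then e1 else γ i with hgdef
    set g' : ℕ → Finset V := fun i => if i = n then e2 else γ' i with hg'def
    apply twoChains hc hNC (n + 1) (by omega) a b g g'
    · intro i hi
      rw [hadef]; simp only
      by_cases h : i = n + 1
      · rw [if_pos h, h]; exact hhv
      · rw [if_neg h]; exact hhα i (by omega)
    · intro i hi
      rw [hbdef]; simp only
      by_cases h : i = n + 1
      · rw [if_pos h, h]; exact hhv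
      · rw [if_neg h]; exact hhβ i (by omega)
    · intro i hi
      rw [hadef, hgdef]; simp only
      by_cases h : i = n
      · rw [if_pos h, if_neg (by omega), if_pos (by omega), h, hα]
        exact ⟨he1, hu1, hv1⟩
      · rw [if_neg h, if_neg (by omega), if_neg (by omega)]
        exact hγ i (by omega)
    · intro i hi
      rw [hbdef, hg'def]; simp only
      by_cases h : i = n
      · rw [if_pos h, if_neg (by omega), if_pos (by omega), h, hβ]
        exact ⟨he2, hu2, hv2⟩
      · rw [if_neg h, if_neg (by omega), if_neg (by omega)]
        exact hγ' i (by omega)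
    · intro h
      exfalso
      apply h
      rw [hadef, hbdef]
      simp
    · intro _
      rw [hgdef, hg'def]
      simpa using hne

lemma exists_child (hc : (toGraph E).Connected) (hNC : ¬ HasCycle E) {k : ℕ} (hk : 2 ≤ k)
    (hcard : ∀ e ∈ E, e.card = k) {v : V}
    (h2 : 1 < (E.filter (fun e => v ∈ e)).card) :
    ∃ w, (toGraph E).Adj v w ∧ height E v0 w = height E v0 v + 1 := by
  obtain ⟨e1, h1e, e2, h2e, hne⟩ := Finset.one_lt_card.mp h2
  rw [Finset.mem_filter] at h1e h2e
  by_contra hno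
  push_neg at hno
  set n := height E v0 v with hndef
  have hother : ∀ e, e ∈ E → v ∈ e → ∃ x ∈ e, x ≠ v := by
    intro e he hve
    have hcc : 1 < e.card := by rw [hcard e he]; exact hk
    obtain ⟨x, hx, y, hy, hxy⟩ := Finset.one_lt_card.mp hcc
    by_cases h : x = v
    · exact ⟨y, hy, by rw [← h]; exact hxy.symm⟩
    · exact ⟨x, hx, h⟩
  have hedge : ∀ e, e ∈ E → v ∈ e → ∀ z ∈ e, height E v0 z ≤ n := by
    intro e he hve z hz
    by_cases hzv : z = v
    · rw [hzv]
    · have ha := edge_height (v0 := v0) hc he hve hz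
      have hb := hno z (toGraph_adj' (fun h => hzv h.symm) he hve hz)
      omega
  rcases Nat.eq_zero_or_pos n with hn0 | hnpos
  · have hv0 : v = v0 := eq_v0_of_height_zero hc (by rw [← hndef, hn0])
    obtain ⟨x, hxe, hxv⟩ := hother e1 h1e.1 h1e.2
    have hx1 := hedge e1 h1e.1 h1e.2 x hxe
    have hx0 : height E v0 x = 0 := by omega
    exact hxv (by rw [eq_v0_of_height_zero hc hx0, ← hv0])
  · have key : ∀ e, e ∈ E → v ∈ e → ∃ u ∈ e, height E v0 u = n - 1 := by
      intro e he hve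
      by_contra hp
      push_neg at hp
      have hall : ∀ z ∈ e, height E v0 z = n := by
        intro z hz
        have ha := hedge e he hve z hz
        have hb := edge_height (v0 := v0) hc he hz hve
        have hcc := hp z hz
        rw [← hndef] at hb
        omega
      obtain ⟨x, hxe, hxv⟩ := hother e he hve
      exact no_horizontal hc hNC hnpos he hxe hve hxv (hall x hxe) (hall v hve)
        (fun z hz => (hall z hz).ge)
    obtain ⟨u1, hu1, hh1⟩ := key e1 h1e.1 h1e.2
    obtain ⟨u2, hu2, hh2⟩ := key e2 h2e.1 h2e.2
    exact unique_parent hc hNC h1e.1 h2e.1 hne h1e.2 h2e.2 hu1 hu2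
      (show height E v0 v = (n - 1) + 1 by omega) hh1 hh2

end Final
/-- if f is the first Dirichlet eigenfunction of a k-uniform
supertree with boundary, rooted at a vertex v0 maximizing f, and f is
non-increasing with height, then every interior vertex v has a child w (a
neighbor at height h(v)+1) with f(w) < f(v). -/
theorem interior_vertex_has_smaller_child (k : ℕ) (hk : 2 ≤ k)
    (E : Finset (Finset V)) (hG : IsSupertree k E) (hb : ∃ v, deg E v = 1)
    (f : V → ℝ) (hf : IsFirstEigfun E f)
    (v0 : V) (hmax : ∀ v, f v ≤ f v0)
    (hmono : ∀ u v : V, height E v0 u < height E v0 v → f v ≤ f u) :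
    ∀ v, deg E v ≠ 1 → ∃ w, (toGraph E).Adj v w ∧
      height E v0 w = height E v0 v + 1 ∧ f w < f v := by
  intro v hv
  obtain ⟨hcard, hconn', hNC⟩ := hG
  have hc : (toGraph E).Connected := conn_of_hyper hconn' v0
  have hlam : 0 < firstEig E := firstEig_pos hk ⟨hcard, hconn', hNC⟩ hb hf
  have hfv : 0 < f v := hf.2.2.1 v hv
  have hlap : lap E f v = firstEig E * f v := hf.2.2.2 v hv
  have hsum : 0 < ∑ j, adjMat E v j * (f v - f j) := by
    rw [← lap_eq hk hcard, hlap]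
    exact mul_pos hlam hfv
  have hexj : ∃ j, 0 < adjMat E v j * (f v - f j) := by
    by_contra h
    push_neg at h
    have := Finset.sum_nonpos (fun j (_ : j ∈ Finset.univ) => h j)
    linarith
  obtain ⟨j, hj⟩ := hexj
  obtain ⟨hA, hfj'⟩ : 0 < adjMat E v j ∧ 0 < f v - f j := by
    rcases mul_pos_iff.mp hj with ⟨h1, h2⟩ | ⟨h1, h2⟩
    · exact ⟨h1, h2⟩
    · exact absurd h1 (not_lt.mpr (adjMat_nonneg hk hcard v j))
  have hfj : f j < f v := by linarith
  have hadj : (toGraph E).Adj v j := by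
    by_contra h
    rw [adjMat_eq_zero h] at hA
    exact lt_irrefl _ hA
  have hjle : height E v0 j ≤ height E v0 v + 1 := height_le_of_adj hc hadj
  have hjge : ¬ (height E v0 j < height E v0 v) := by
    intro h
    exact absurd (hmono j v h) (not_le.mpr hfj)
  by_cases hcase : height E v0 j = height E v0 v + 1
  · exact ⟨j, hadj, hcase, hfj⟩
  · have hjeq : height E v0 j = height E v0 v := by omega
    have hdeg2 : 1 < (E.filter (fun e => v ∈ e)).card := by
      have h1 : (E.filter (fun e => v ∈ e)).card ≠ 1 := hv
      have h0 : 0 < (E.filter (fun e => v ∈ e)).card := by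
        obtain ⟨hne, e, he, hve, hje⟩ := hadj
        exact Finset.card_pos.mpr ⟨e, Finset.mem_filter.mpr ⟨he, hve⟩⟩
      omega
    obtain ⟨w, hadjw, hhw⟩ := exists_child hc hNC hk hcard hdeg2
    refine ⟨w, hadjw, hhw, ?_⟩
    have hle : f w ≤ f j := hmono j w (by rw [hjeq, hhw]; omega)
    linarith
end
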